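/- arXiv:2603.27382 — 8 statements merged into one kernel-verified Lean document; each statement's English description precedes it below -/
import Mathlib

section
/- Let x, v : [0,∞) → E be continuously differentiable curves with ‖x(t)‖ = 1 for all t ≥ 0, satisfying the closed-loop system x'(t) = P(x(t)) v(t) and v'(t) = -k·b(d(x(t))) • (v(t) - ν(x(t))) + (Dν(x(t)))(P(x(t)) v(t)), where k > 0 and Dν denotes the Fréchet derivative of ν. Assume: (i) d is continuous on the unit sphere, with d(y) differentiable at every unit y with 0 < d(y) ≤ δ_u and the chain rule holds along the curve, i.e. (d∘x)'(t) = ⟪∇d(x(t)), x'(t)⟫ whenever 0 < d(x(t)) ≤ δ_u; (ii) ‖P(y) ∇d(y)‖ ≤ D_d for every unit y with 0 < d(y) ≤ δ_u; (iii) ⟪∇d(y), ν(y)⟫ ≥ μ for every unit y with 0 < d(y) ≤ δ_d; (iv) ⟪y, ν(y)⟫ = 0 and ‖ν(y)‖ ≤ D₁ for every unit y with d(y) > 0; (v) b(s) = 1/s for all s ∈ (0, ε₁] and b(s) > 0 for all s > 0, where 0 < ε₁ < δ_u; (vi) ν is differentiable at x(t) for every t ≥ 0. If d(x(0)) > 0,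 then d(x(t)) > 0 for all t ≥ 0. -/
open scoped RealInnerProductSpace

/-- Orthogonal projection onto the tangent space of the unit sphere at `x`:
`P(x) v = v - ⟪x, v⟫ • x`. -/
noncomputable def sproj {F : Type*} [NormedAddCommGroup F] [InnerProductSpace ℝ F]
    (x v : F) : F :=
  v - ⟪x, v⟫ • x

/-- Claim 1 of Lemma 1 (safety): along closed-loop trajectories of the
second-order system on the sphere with dynamic damping, the separation
function stays strictly positive if it is initially strictly positive. -/
theorem safety_claim1
    (n : ℕ)
    (d : EuclideanSpace ℝ (Fin (n+1)) → ℝ)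
    (ν : EuclideanSpace ℝ (Fin (n+1)) → EuclideanSpace ℝ (Fin (n+1)))
    (b : ℝ → ℝ)
    (μ D_d D₁ δ_d δ_u ε₁ k : ℝ)
    (hμ : 0 < μ) (hDd : 0 < D_d) (hD₁ : 0 < D₁)
    (hδd : 0 < δ_d) (hδdu : δ_d ≤ δ_u) (hε₁ : 0 < ε₁) (hε₁u : ε₁ < δ_u)
    (hk : 0 < k)
    (x v : ℝ → EuclideanSpace ℝ (Fin (n+1)))
    -- x and v are continuously differentiable on [0, ∞)
    (hx_smooth : ContDiffOn ℝ 1 x (Set.Ici (0:ℝ)))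
    (hv_smooth : ContDiffOn ℝ 1 v (Set.Ici (0:ℝ)))
    -- x evolves on the unit sphere
    (hx_sphere : ∀ t : ℝ, 0 ≤ t → ‖x t‖ = 1)
    -- closed-loop dynamics: x' = P(x) v
    (hx_ode : ∀ t : ℝ, 0 ≤ t → HasDerivAt x (sproj (x t) (v t)) t)
    -- v' = -k b(d(x)) (v - ν(x)) + Dν(x) (P(x) v)
    (hv_ode : ∀ t : ℝ, 0 ≤ t →
      HasDerivAt v
        (-(k * b (d (x t))) • (v t - ν (x t)) +
          fderiv ℝ ν (x t) (sproj (x t) (v t))) t)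
    -- (i) d continuous on the unit sphere, differentiable near the unsafe set,
    -- and chain rule along the curve
    (hd_cont : ContinuousOn d (Metric.sphere (0 : EuclideanSpace ℝ (Fin (n+1))) 1))
    (hd_diff : ∀ y : EuclideanSpace ℝ (Fin (n+1)), ‖y‖ = 1 →
      0 < d y → d y ≤ δ_u → DifferentiableAt ℝ d y)
    (hd_chain : ∀ t : ℝ, 0 ≤ t → 0 < d (x t) → d (x t) ≤ δ_u →
      HasDerivAt (fun s => d (x s)) ⟪gradient d (x t), sproj (x t) (v t)⟫ t)
    -- (ii) bounded projected gradient near the unsafe set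
    (hgrad_bdd : ∀ y : EuclideanSpace ℝ (Fin (n+1)), ‖y‖ = 1 →
      0 < d y → d y ≤ δ_u → ‖sproj y (gradient d y)‖ ≤ D_d)
    -- (iii) the desired vector field points away from the unsafe set
    (hmove : ∀ y : EuclideanSpace ℝ (Fin (n+1)), ‖y‖ = 1 →
      0 < d y → d y ≤ δ_d → μ ≤ ⟪gradient d y, ν y⟫)
    -- (iv) ν is tangent and bounded on the free space
    (hν_tangent : ∀ y : EuclideanSpace ℝ (Fin (n+1)), ‖y‖ = 1 → 0 < d y → ⟪y, ν y⟫ = 0)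
    (hν_bdd : ∀ y : EuclideanSpace ℝ (Fin (n+1)), ‖y‖ = 1 → 0 < d y → ‖ν y‖ ≤ D₁)
    -- (v) damping profile
    (hb_eq : ∀ s : ℝ, 0 < s → s ≤ ε₁ → b s = 1 / s)
    (hb_pos : ∀ s : ℝ, 0 < s → 0 < b s)
    -- (vi) ν differentiable along the trajectory
    (hν_diff : ∀ t : ℝ, 0 ≤ t → DifferentiableAt ℝ ν (x t))
    -- initial condition in the free space
    (h0 : 0 < d (x 0)) :
    ∀ t : ℝ, 0 ≤ t → 0 < d (x t) := by
  by_contra hcon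
  push_neg at hcon
  obtain ⟨T, hT0, hTle⟩ := hcon
  set φ : ℝ → ℝ := fun t => d (x t) with hφdef
  have hxc : ContinuousOn x (Set.Ici 0) := fun t ht =>
    (hx_ode t ht).continuousAt.continuousWithinAt
  have hφc : ContinuousOn φ (Set.Ici 0) := by
    refine hd_cont.comp hxc ?_
    intro t ht
    simpa [mem_sphere_zero_iff_norm] using hx_sphere t ht
  -- first bad time
  set S : Set ℝ := Set.Icc 0 T ∩ φ ⁻¹' Set.Iic 0 with hSdef
  have hSclosed : IsClosed S :=
    (hφc.mono Set.Icc_subset_Ici_self).preimage_isClosed_of_isClosed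
      isClosed_Icc isClosed_Iic
  have hSne : S.Nonempty := ⟨T, ⟨hT0, le_rfl⟩, hTle⟩
  have hSbdd : BddBelow S := ⟨0, fun s hs => hs.1.1⟩
  set t₁ := sInf S with ht₁def
  have ht₁S : t₁ ∈ S := hSclosed.csInf_mem hSne hSbdd
  have ht₁0 : 0 ≤ t₁ := ht₁S.1.1
  have ht₁le : φ t₁ ≤ 0 := ht₁S.2
  have hpos : ∀ t : ℝ, 0 ≤ t → t < t₁ → 0 < φ t := by
    intro t ht htlt
    by_contra h
    push_neg at h
    have : t₁ ≤ t := csInf_le hSbdd ⟨⟨ht, htlt.le.trans ht₁S.1.2⟩, h⟩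
    linarith
  have ht₁pos : 0 < t₁ := by
    rcases lt_or_eq_of_le ht₁0 with h | h
    · exact h
    · exfalso; rw [← h] at ht₁le; exact absurd h0 (not_lt.2 ht₁le)
  -- threshold
  set c : ℝ := min ε₁ δ_d with hcdef
  have hcpos : 0 < c := lt_min hε₁ hδd
  -- find a time a < t₁ after which φ < c up to t₁
  have hexa : ∃ a : ℝ, 0 ≤ a ∧ a < t₁ ∧ ∀ t ∈ Set.Ico a t₁, φ t < c := by
    set B : Set ℝ := Set.Icc 0 t₁ ∩ φ ⁻¹' Set.Ici c with hBdef
    by_cases hB : B.Nonempty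
    · have hBclosed : IsClosed B :=
        (hφc.mono Set.Icc_subset_Ici_self).preimage_isClosed_of_isClosed
          isClosed_Icc isClosed_Ici
      have hBbdd : BddAbove B := ⟨t₁, fun s hs => hs.1.2⟩
      set t₀ := sSup B with ht₀def
      have ht₀B : t₀ ∈ B := hBclosed.csSup_mem hB hBbdd
      have ht₀lt : t₀ < t₁ := by
        rcases lt_or_eq_of_le ht₀B.1.2 with h | h
        · exact h
        · exfalso; have := ht₀B.2; rw [h] at this
          simp only [Set.mem_preimage, Set.mem_Ici] at this; linarith
      refine ⟨(t₀ + t₁) / 2, by linarith [ht₀B.1.1], by linarith, ?_⟩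
      intro t ht
      by_contra h
      push_neg at h
      have htB : t ∈ B := ⟨⟨by linarith [ht₀B.1.1, ht.1], ht.2.le⟩, h⟩
      have := le_csSup hBbdd htB
      have : t₀ < t := by linarith [ht.1]
      linarith [le_csSup hBbdd htB]
    · refine ⟨0, le_rfl, ht₁pos, ?_⟩
      intro t ht
      by_contra h
      push_neg at h
      exact hB ⟨t, ⟨ht.1, ht.2.le⟩, h⟩
  obtain ⟨a, ha0, hat₁, hlt⟩ := hexa
  -- basic facts on J = Ico a t₁
  have hJfacts : ∀ t ∈ Set.Ico a t₁, 0 ≤ t ∧ 0 < φ t ∧ φ t ≤ ε₁ ∧ φ t ≤ δ_d ∧ φ t ≤ δ_u ∧ ‖x t‖ = 1 := by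
    intro t ht
    have ht0 : (0:ℝ) ≤ t := le_trans ha0 ht.1
    have hφpos : 0 < φ t := hpos t ht0 ht.2
    have hφc' : φ t < c := hlt t ht
    exact ⟨ht0, hφpos, le_trans hφc'.le (min_le_left _ _),
      le_trans hφc'.le (min_le_right _ _),
      le_of_lt (lt_of_lt_of_le (lt_of_lt_of_le hφc' (min_le_left _ _)) hε₁u.le),
      hx_sphere t ht0⟩
  -- Lyapunov ingredients
  set ψ : ℝ → ℝ := fun t => (⟪v t - ν (x t), v t - ν (x t)⟫ : ℝ) with hψdef
  set ε : ℝ := (μ / (2 * D_d)) ^ 2 with hεdef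
  have hεpos : 0 < ε := by positivity
  have hsqrtε : Real.sqrt ε = μ / (2 * D_d) := Real.sqrt_sq (by positivity)
  set g : ℝ → ℝ := fun t => Real.sqrt (ψ t + ε) with hgdef
  have hψnn : ∀ t, 0 ≤ ψ t := fun t => real_inner_self_nonneg
  have hgpos : ∀ t, 0 < g t := fun t => Real.sqrt_pos.2 (by linarith [hψnn t])
  have hgε : ∀ t, Real.sqrt ε ≤ g t := fun t =>
    Real.sqrt_le_sqrt (by linarith [hψnn t])
  have hg2 : ∀ t, g t ^ 2 = ψ t + ε := fun t =>
    Real.sq_sqrt (by linarith [hψnn t])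
  set F : ℝ → ℝ := fun t => φ t * Real.exp (-(D_d / k) * g t) with hFdef
  -- main derivative estimate
  have main : ∀ t ∈ Set.Ico a t₁, ∃ F', HasDerivAt F F' t ∧ 0 < F' := by
    intro t ht
    obtain ⟨ht0, hφpos, hφε₁, hφδd, hφδu, hX⟩ := hJfacts t ht
    have hbval : b (φ t) = 1 / φ t := hb_eq _ hφpos hφε₁
    -- derivative of e := v - ν ∘ x
    have hνx : HasDerivAt (fun s => ν (x s)) (fderiv ℝ ν (x t) (sproj (x t) (v t))) t :=
      (hν_diff t ht0).hasFDerivAt.comp_hasDerivAt t (hx_ode t ht0)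
    have he : HasDerivAt (fun s => v s - ν (x s)) (-(k * b (φ t)) • (v t - ν (x t))) t := by
      have := (hv_ode t ht0).sub hνx
      rw [add_sub_cancel_right] at this
      exact this
    -- derivative of ψ
    have hψ' : HasDerivAt ψ (-(2 * (k * b (φ t))) * ψ t) t := by
      have h2 := (he.inner ℝ he)
      have : (⟪v t - ν (x t), -(k * b (φ t)) • (v t - ν (x t))⟫ : ℝ) +
          ⟪-(k * b (φ t)) • (v t - ν (x t)), v t - ν (x t)⟫ = -(2 * (k * b (φ t))) * ψ t := by
        rw [real_inner_smul_left, real_inner_smul_right, hψdef]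
        ring
      rw [this] at h2
      exact h2
    -- derivative of g
    have hg' : HasDerivAt g ((-(2 * (k * b (φ t))) * ψ t) / (2 * g t)) t := by
      have hne : ψ t + ε ≠ 0 := by linarith [hψnn t]
      have := (hψ'.add_const ε).sqrt hne
      exact this
    -- derivative of exp factor
    have hE : HasDerivAt (fun s => Real.exp (-(D_d / k) * g s))
        (Real.exp (-(D_d / k) * g t) * (-(D_d / k) * ((-(2 * (k * b (φ t))) * ψ t) / (2 * g t)))) t := by
      have := (hg'.const_mul (-(D_d / k))).exp
      simpa [mul_comm] using this
    -- derivative of φ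
    have hφ' : HasDerivAt φ (⟪gradient d (x t), sproj (x t) (v t)⟫) t :=
      hd_chain t ht0 hφpos hφδu
    have hF' : HasDerivAt F
        ((⟪gradient d (x t), sproj (x t) (v t)⟫) * Real.exp (-(D_d / k) * g t) +
          φ t * (Real.exp (-(D_d / k) * g t) *
            (-(D_d / k) * ((-(2 * (k * b (φ t))) * ψ t) / (2 * g t))))) t :=
      hφ'.mul hE
    refine ⟨_, hF', ?_⟩
    -- positivity of the derivative
    set I : ℝ := ⟪gradient d (x t), sproj (x t) (v t)⟫ with hIdef
    set E : EuclideanSpace ℝ (Fin (n+1)) := v t - ν (x t) with hEdef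
    -- lower bound on I
    have hdx : 0 < d (x t) := hφpos
    have htan : (⟪x t, ν (x t)⟫ : ℝ) = 0 := hν_tangent _ hX hdx
    have hsplit : sproj (x t) (v t) = ν (x t) + sproj (x t) E := by
      simp only [sproj, hEdef, inner_sub_right, htan]
      module
    have hsym : (⟪gradient d (x t), sproj (x t) E⟫ : ℝ) = ⟪sproj (x t) (gradient d (x t)), E⟫ := by
      simp only [sproj, inner_sub_left, inner_sub_right, real_inner_smul_left,
        real_inner_smul_right, real_inner_comm (x t)]
      ring
    have hEnorm : ‖E‖ ≤ g t := by
      have h1 : ψ t = ‖E‖ ^ 2 := by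
        simp only [hψdef, hEdef, real_inner_self_eq_norm_sq]
      have := hgε t
      calc ‖E‖ = Real.sqrt (‖E‖ ^ 2) := (Real.sqrt_sq (norm_nonneg _)).symm
        _ ≤ Real.sqrt (ψ t + ε) := Real.sqrt_le_sqrt (by rw [h1]; linarith)
        _ = g t := rfl
    have hinner_bd : -(D_d * g t) ≤ (⟪sproj (x t) (gradient d (x t)), E⟫ : ℝ) := by
      have habs : |(⟪sproj (x t) (gradient d (x t)), E⟫ : ℝ)| ≤ D_d * g t := by
        calc |(⟪sproj (x t) (gradient d (x t)), E⟫ : ℝ)|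
            ≤ ‖sproj (x t) (gradient d (x t))‖ * ‖E‖ := abs_real_inner_le_norm _ _
          _ ≤ D_d * g t := mul_le_mul (hgrad_bdd _ hX hdx hφδu) hEnorm (norm_nonneg _) hDd.le
      linarith [neg_abs_le (⟪sproj (x t) (gradient d (x t)), E⟫ : ℝ)]
    have hIlb : μ - D_d * g t ≤ I := by
      have hmv : μ ≤ (⟪gradient d (x t), ν (x t)⟫ : ℝ) := hmove _ hX hdx hφδd
      have : I = ⟪gradient d (x t), ν (x t)⟫ + ⟪gradient d (x t), sproj (x t) E⟫ := by
        rw [hIdef, hsplit, inner_add_right]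
      rw [this, hsym]
      linarith
    -- simplify the second term of F'
    have hterm : φ t * (Real.exp (-(D_d / k) * g t) *
        (-(D_d / k) * ((-(2 * (k * b (φ t))) * ψ t) / (2 * g t)))) =
        Real.exp (-(D_d / k) * g t) * (D_d * ψ t / g t) := by
      rw [hbval]
      have hgne : g t ≠ 0 := (hgpos t).ne'
      have hφne : φ t ≠ 0 := hφpos.ne'
      have hkne : k ≠ 0 := hk.ne'
      field_simp
    rw [hterm]
    have harith : μ / 2 ≤ I + D_d * ψ t / g t := by
      have hgne : g t ≠ 0 := (hgpos t).ne'
      have h2 : D_d * ψ t / g t = D_d * g t - D_d * ε / g t := by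
        have : ψ t = g t ^ 2 - ε := by linarith [hg2 t]
        rw [this]
        field_simp
      have h3 : D_d * ε / g t ≤ μ / 2 := by
        have hsε : 0 < Real.sqrt ε := Real.sqrt_pos.2 hεpos
        have : D_d * ε / g t ≤ D_d * ε / Real.sqrt ε :=
          div_le_div_of_nonneg_left (by positivity) hsε (hgε t)
        have heq : D_d * ε / Real.sqrt ε = μ / 2 := by
          rw [mul_div_assoc, Real.div_sqrt, hsqrtε]
          field_simp
        linarith
      linarith
    have hexp : 0 < Real.exp (-(D_d / k) * g t) := Real.exp_pos _
    have hfact : I * Real.exp (-(D_d / k) * g t) + Real.exp (-(D_d / k) * g t) * (D_d * ψ t / g t)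
        = Real.exp (-(D_d / k) * g t) * (I + D_d * ψ t / g t) := by ring
    rw [hfact]
    exact mul_pos hexp (lt_of_lt_of_le (by linarith) harith)
  -- F is strictly monotone on Ico a t₁
  have hFcont : ContinuousOn F (Set.Ico a t₁) := by
    intro t ht
    obtain ⟨F', hF', _⟩ := main t ht
    exact hF'.continuousAt.continuousWithinAt
  have hFmono : StrictMonoOn F (Set.Ico a t₁) := by
    apply strictMonoOn_of_deriv_pos (convex_Ico a t₁) hFcont
    intro t ht
    rw [interior_Ico] at ht
    obtain ⟨F', hF', hF'pos⟩ := main t (Set.Ioo_subset_Ico_self ht)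
    rw [hF'.deriv]
    exact hF'pos
  have haJ : a ∈ Set.Ico a t₁ := ⟨le_rfl, hat₁⟩
  have hFa_pos : 0 < F a := by
    obtain ⟨_, hφa, _⟩ := hJfacts a haJ
    exact mul_pos hφa (Real.exp_pos _)
  have hφlb : ∀ t ∈ Set.Ico a t₁, F a ≤ φ t := by
    intro t ht
    have hFle : F a ≤ F t := by
      rcases eq_or_lt_of_le ht.1 with h | h
      · rw [h]
      · exact (hFmono haJ ht h).le
    have hexple : Real.exp (-(D_d / k) * g t) ≤ 1 := by
      apply Real.exp_le_one_iff.2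
      have := hgpos t
      have : 0 ≤ (D_d / k) * g t := by positivity
      linarith
    obtain ⟨_, hφt, _⟩ := hJfacts t ht
    calc F a ≤ F t := hFle
      _ = φ t * Real.exp (-(D_d / k) * g t) := rfl
      _ ≤ φ t * 1 := mul_le_mul_of_nonneg_left hexple hφt.le
      _ = φ t := mul_one _
  -- contradiction via continuity at t₁
  have hne : a ≠ t₁ := ne_of_lt hat₁
  have hclos : t₁ ∈ closure (Set.Ioo a t₁) := by
    rw [closure_Ioo hne]
    exact ⟨hat₁.le, le_rfl⟩
  have hNeBot : (nhdsWithin t₁ (Set.Ioo a t₁)).NeBot :=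
    mem_closure_iff_nhdsWithin_neBot.mp hclos
  have htend : Filter.Tendsto φ (nhdsWithin t₁ (Set.Ioo a t₁)) (nhds (φ t₁)) := by
    exact ((hφc t₁ (Set.mem_Ici.2 ht₁0)).mono
      (fun s hs => Set.mem_Ici.2 (le_trans ha0 hs.1.le))).tendsto
  have hge : F a ≤ φ t₁ := by
    refine ge_of_tendsto htend ?_
    filter_upwards [self_mem_nhdsWithin] with s hs
    exact hφlb s (Set.Ioo_subset_Ico_self hs)
  linarith
end

section
/- Let x, v : [0,∞) → E be continuously differentiable curves with ‖x(t)‖ = 1 for all t ≥ 0, satisfying x'(t) = P(x(t)) v(t) and v'(t) = -k·b(d(x(t))) • (v(t) - ν(x(t))) + (Dν(x(t)))(P(x(t)) v(t)) with k > 0, under the hypotheses: (i) d is continuous on the unit sphere and differentiable at every unit y with 0 < d(y) ≤ δ_u, with (d∘x)'(t) = ⟪∇d(x(t)), x'(t)⟫ whenever 0 < d(x(t)) ≤ δ_u; (ii) ‖P(y) ∇d(y)‖ ≤ D_d for every unit y with 0 < d(y) ≤ δ_u; (iii) ⟪∇d(y), ν(y)⟫ ≥ μ for every unit y with 0 < d(y)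 ≤ δ_d; (iv) ⟪y, ν(y)⟫ = 0 and ‖ν(y)‖ ≤ D₁ for every unit y with d(y) > 0; (v) b(s) = 1/s for s ∈ (0, ε₁] and b(s) ≥ 1 for all s > 0, where 0 < ε₁ < δ_u; (vi) ν is differentiable at x(t) for every t ≥ 0; (vii) d(x(0)) > 0. Then there exists a time T ≥ 0, depending on the initial condition (x(0), v(0)), such that d(x(t)) ≥ δ_d for all t ≥ T. -/
open scoped RealInnerProductSpace

lemma inner_sproj {F : Type*} [NormedAddCommGroup F] [InnerProductSpace ℝ F]
    (x g v : F) : ⟪g, sproj x v⟫ = ⟪sproj x g, v⟫ := by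
  simp only [sproj, inner_sub_left, inner_sub_right, real_inner_smul_left,
    real_inner_smul_right]
  rw [real_inner_comm g x]; ring

lemma sproj_of_tangent {F : Type*} [NormedAddCommGroup F] [InnerProductSpace ℝ F]
    {x w : F} (h : ⟪x, w⟫ = 0) : sproj x w = w := by
  simp [sproj, h]

set_option maxHeartbeats 1000000 in
/-- Claim 2 of Lemma 1: trajectories of the
closed-loop second-order system on the sphere eventually stay uniformly
separated (by δ_d) from the unsafe set. -/
theorem safety_claim2
    (n : ℕ)
    (d : EuclideanSpace ℝ (Fin (n+1)) → ℝ)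
    (ν : EuclideanSpace ℝ (Fin (n+1)) → EuclideanSpace ℝ (Fin (n+1)))
    (b : ℝ → ℝ)
    (μ D_d D₁ δ_d δ_u ε₁ k : ℝ)
    (hμ : 0 < μ) (hDd : 0 < D_d) (hD₁ : 0 < D₁)
    (hδd : 0 < δ_d) (hδdu : δ_d ≤ δ_u) (hε₁ : 0 < ε₁) (hε₁u : ε₁ < δ_u)
    (hk : 0 < k)
    (x v : ℝ → EuclideanSpace ℝ (Fin (n+1)))
    -- x and v are continuously differentiable on [0, ∞)
    (hx_smooth : ContDiffOn ℝ 1 x (Set.Ici (0:ℝ)))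
    (hv_smooth : ContDiffOn ℝ 1 v (Set.Ici (0:ℝ)))
    -- x evolves on the unit sphere
    (hx_sphere : ∀ t : ℝ, 0 ≤ t → ‖x t‖ = 1)
    -- closed-loop dynamics: x' = P(x) v
    (hx_ode : ∀ t : ℝ, 0 ≤ t → HasDerivAt x (sproj (x t) (v t)) t)
    -- v' = -k b(d(x)) (v - ν(x)) + Dν(x) (P(x) v)
    (hv_ode : ∀ t : ℝ, 0 ≤ t →
      HasDerivAt v
        (-(k * b (d (x t))) • (v t - ν (x t)) +
          fderiv ℝ ν (x t) (sproj (x t) (v t))) t)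
    -- (i) d continuous on the unit sphere, differentiable near the unsafe set,
    -- and chain rule along the curve
    (hd_cont : ContinuousOn d (Metric.sphere (0 : EuclideanSpace ℝ (Fin (n+1))) 1))
    (hd_diff : ∀ y : EuclideanSpace ℝ (Fin (n+1)), ‖y‖ = 1 →
      0 < d y → d y ≤ δ_u → DifferentiableAt ℝ d y)
    (hd_chain : ∀ t : ℝ, 0 ≤ t → 0 < d (x t) → d (x t) ≤ δ_u →
      HasDerivAt (fun s => d (x s)) ⟪gradient d (x t), sproj (x t) (v t)⟫ t)
    -- (ii) bounded projected gradient near the unsafe set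
    (hgrad_bdd : ∀ y : EuclideanSpace ℝ (Fin (n+1)), ‖y‖ = 1 →
      0 < d y → d y ≤ δ_u → ‖sproj y (gradient d y)‖ ≤ D_d)
    -- (iii) the desired vector field points away from the unsafe set
    (hmove : ∀ y : EuclideanSpace ℝ (Fin (n+1)), ‖y‖ = 1 →
      0 < d y → d y ≤ δ_d → μ ≤ ⟪gradient d y, ν y⟫)
    -- (iv) ν is tangent and bounded on the free space
    (hν_tangent : ∀ y : EuclideanSpace ℝ (Fin (n+1)), ‖y‖ = 1 → 0 < d y → ⟪y, ν y⟫ = 0)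
    (hν_bdd : ∀ y : EuclideanSpace ℝ (Fin (n+1)), ‖y‖ = 1 → 0 < d y → ‖ν y‖ ≤ D₁)
    -- (v) damping profile
    (hb_eq : ∀ s : ℝ, 0 < s → s ≤ ε₁ → b s = 1 / s)
    (hb_ge_one : ∀ s : ℝ, 0 < s → 1 ≤ b s)
    -- (vi) ν differentiable along the trajectory
    (hν_diff : ∀ t : ℝ, 0 ≤ t → DifferentiableAt ℝ ν (x t))
    -- initial condition in the free space
    (h0 : 0 < d (x 0)) :
    ∃ T : ℝ, 0 ≤ T ∧ ∀ t : ℝ, T ≤ t → δ_d ≤ d (x t) := by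
  classical
  -- abbreviations
  set f : ℝ → ℝ := fun s => d (x s) with hf_def
  set e : ℝ → EuclideanSpace ℝ (Fin (n+1)) := fun s => v s - ν (x s) with he_def
  set g : ℝ → ℝ := fun s => ⟪e s, e s⟫ with hg_def
  have hg_nonneg : ∀ t : ℝ, 0 ≤ g t := fun t => real_inner_self_nonneg
  have hg_norm : ∀ t : ℝ, g t = ‖e t‖ ^ 2 := fun t => real_inner_self_eq_norm_sq _
  -- continuity of f on [0, ∞)
  have hf_cont : ContinuousOn f (Set.Ici (0:ℝ)) := by
    apply hd_cont.comp hx_smooth.continuousOn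
    intro t ht
    exact mem_sphere_zero_iff_norm.mpr (hx_sphere t ht)
  -- derivative of e
  have he_deriv : ∀ t : ℝ, 0 ≤ t →
      HasDerivAt e (-(k * b (f t)) • e t) t := by
    intro t ht
    have hcomp : HasDerivAt (fun s => ν (x s))
        (fderiv ℝ ν (x t) (sproj (x t) (v t))) t :=
      (hν_diff t ht).hasFDerivAt.comp_hasDerivAt t (hx_ode t ht)
    have h2 := (hv_ode t ht).sub hcomp
    have h3 : HasDerivAt e (-(k * b (d (x t))) • (v t - ν (x t)) +
        fderiv ℝ ν (x t) (sproj (x t) (v t)) - fderiv ℝ ν (x t) (sproj (x t) (v t))) t := h2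
    simpa using h3
  -- derivative of g
  have hg_deriv : ∀ t : ℝ, 0 ≤ t →
      HasDerivAt g (-(2 * (k * b (f t))) * g t) t := by
    intro t ht
    have := (he_deriv t ht).inner (𝕜 := ℝ) (he_deriv t ht)
    refine this.congr_deriv ?_
    rw [real_inner_smul_right, real_inner_smul_left]
    simp only [hg_def]
    ring
  have hg_cont : ContinuousOn g (Set.Ici (0:ℝ)) := fun t ht =>
    ((hg_deriv t ht).continuousAt).continuousWithinAt
  -- derivative of f at good points
  have hf_deriv : ∀ t : ℝ, 0 ≤ t → 0 < f t → f t ≤ δ_u →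
      HasDerivAt f ⟪sproj (x t) (gradient d (x t)), v t⟫ t := by
    intro t ht h1 h2
    have := hd_chain t ht h1 h2
    rwa [inner_sproj] at this
  -- lower bound on the f-derivative by -(D_d * ‖v t‖)
  have hub : ∀ t : ℝ, 0 ≤ t → 0 < f t → f t ≤ δ_u →
      -(D_d * ‖v t‖) ≤ ⟪sproj (x t) (gradient d (x t)), v t⟫ := by
    intro t ht h1 h2
    have hcs := abs_real_inner_le_norm (sproj (x t) (gradient d (x t))) (v t)
    have ha : ‖sproj (x t) (gradient d (x t))‖ ≤ D_d :=
      hgrad_bdd (x t) (hx_sphere t ht) h1 h2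
    have h3 : ‖sproj (x t) (gradient d (x t))‖ * ‖v t‖ ≤ D_d * ‖v t‖ :=
      mul_le_mul_of_nonneg_right ha (norm_nonneg _)
    have := neg_abs_le ⟪sproj (x t) (gradient d (x t)), v t⟫
    linarith
  -- sharper lower bound near the unsafe set
  have hlb : ∀ t : ℝ, 0 ≤ t → 0 < f t → f t ≤ δ_d →
      μ - D_d * ‖e t‖ ≤ ⟪sproj (x t) (gradient d (x t)), v t⟫ := by
    intro t ht h1 h2
    have hsph := hx_sphere t ht
    have hv_split : v t = ν (x t) + e t := by simp [he_def]
    have hsplit : ⟪sproj (x t) (gradient d (x t)), v t⟫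
        = ⟪sproj (x t) (gradient d (x t)), ν (x t)⟫
          + ⟪sproj (x t) (gradient d (x t)), e t⟫ := by
      conv_lhs => rw [hv_split]
      exact inner_add_right _ _ _
    have htan : ⟪sproj (x t) (gradient d (x t)), ν (x t)⟫ = ⟪gradient d (x t), ν (x t)⟫ := by
      rw [← inner_sproj, sproj_of_tangent (hν_tangent (x t) hsph h1)]
    have hmv : μ ≤ ⟪gradient d (x t), ν (x t)⟫ := hmove (x t) hsph h1 h2
    have hcs := abs_real_inner_le_norm (sproj (x t) (gradient d (x t))) (e t)
    have ha : ‖sproj (x t) (gradient d (x t))‖ ≤ D_d :=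
      hgrad_bdd (x t) hsph h1 (le_trans h2 hδdu)
    have h3 : ‖sproj (x t) (gradient d (x t))‖ * ‖e t‖ ≤ D_d * ‖e t‖ :=
      mul_le_mul_of_nonneg_right ha (norm_nonneg _)
    have h4 := neg_abs_le ⟪sproj (x t) (gradient d (x t)), e t⟫
    rw [hsplit, htan]
    linarith
  -- g is nonincreasing on intervals where f is positive
  have g_decay : ∀ a c : ℝ, 0 ≤ a → (∀ τ, a < τ → τ < c → 0 < f τ) →
      ∀ τ, a ≤ τ → τ ≤ c → g τ ≤ g a := by
    intro a c ha hpos τ h1 h2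
    have hanti : AntitoneOn g (Set.Icc a c) := by
      apply antitoneOn_of_deriv_nonpos (convex_Icc a c)
      · exact hg_cont.mono (fun s hs => le_trans ha hs.1)
      · intro s hs
        rw [interior_Icc] at hs
        exact ((hg_deriv s (le_trans ha hs.1.le)).differentiableAt).differentiableWithinAt
      · intro s hs
        rw [interior_Icc] at hs
        have hs0 : (0:ℝ) ≤ s := le_trans ha hs.1.le
        rw [(hg_deriv s hs0).deriv]
        have hb1 : 1 ≤ b (f s) := hb_ge_one _ (hpos s hs.1 hs.2)
        nlinarith [mul_nonneg (mul_nonneg hk.le (le_trans zero_le_one hb1)) (hg_nonneg s)]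
    exact hanti ⟨le_refl a, le_trans h1 h2⟩ ⟨h1, h2⟩ h1
  -- Claim 1 : f stays positive
  have claim1 : ∀ t : ℝ, 0 ≤ t → 0 < f t := by
    by_contra hcon
    push_neg at hcon
    obtain ⟨t₀, ht₀0, ht₀⟩ := hcon
    set S : Set ℝ := Set.Ici (0:ℝ) ∩ f ⁻¹' Set.Iic (0:ℝ) with hS_def
    have hS_closed : IsClosed S :=
      hf_cont.preimage_isClosed_of_isClosed isClosed_Ici isClosed_Iic
    have hS_ne : S.Nonempty := ⟨t₀, ht₀0, ht₀⟩
    have hS_bdd : BddBelow S := ⟨0, fun s hs => hs.1⟩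
    set t₁ : ℝ := sInf S with ht₁_def
    have ht₁S : t₁ ∈ S := hS_closed.csInf_mem hS_ne hS_bdd
    have ht₁0 : 0 ≤ t₁ := ht₁S.1
    have hft₁ : f t₁ ≤ 0 := ht₁S.2
    have hpos_before : ∀ τ : ℝ, 0 ≤ τ → τ < t₁ → 0 < f τ := by
      intro τ hτ0 hτ1
      by_contra hle
      push_neg at hle
      exact absurd (csInf_le hS_bdd ⟨hτ0, hle⟩) (not_le.mpr hτ1)
    have ht₁pos : 0 < t₁ := by
      rcases lt_or_eq_of_le ht₁0 with h | h
      · exact h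
      · exact absurd hft₁ (by rw [← h]; simpa [hf_def] using not_le.mpr h0)
    -- a small threshold
    set ε₂ : ℝ := min ε₁ δ_d with hε₂_def
    have hε₂pos : 0 < ε₂ := lt_min hε₁ hδd
    have hε₂ε₁ : ε₂ ≤ ε₁ := min_le_left _ _
    have hε₂δd : ε₂ ≤ δ_d := min_le_right _ _
    have hε₂δu : ε₂ < δ_u := lt_of_le_of_lt hε₂ε₁ hε₁u
    -- choose s₀ < t₁ with f < ε₂ on [s₀, t₁]
    have hfc_at : ContinuousAt f t₁ :=
      hf_cont.continuousAt (Ici_mem_nhds ht₁pos)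
    have hev : f ⁻¹' Set.Iio ε₂ ∈ nhds t₁ :=
      hfc_at (Iio_mem_nhds (lt_of_le_of_lt hft₁ hε₂pos))
    obtain ⟨η, hη_pos, hη⟩ := Metric.mem_nhds_iff.mp hev
    set s₀ : ℝ := max (t₁ - η / 2) (t₁ / 2) with hs₀_def
    have hs₀_lt : s₀ < t₁ := by
      apply max_lt <;> linarith
    have hs₀_pos : 0 < s₀ := lt_of_lt_of_le (by linarith) (le_max_right _ _)
    have hf_small : ∀ τ : ℝ, s₀ ≤ τ → τ ≤ t₁ → f τ < ε₂ := by
      intro τ h1 h2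
      have h3 : t₁ - η / 2 ≤ τ := le_trans (le_max_left _ _) h1
      have : τ ∈ Metric.ball t₁ η := by
        rw [Metric.mem_ball, Real.dist_eq, abs_sub_lt_iff]
        constructor <;> linarith
      exact hη this
    have hf_pos : ∀ τ : ℝ, s₀ ≤ τ → τ < t₁ → 0 < f τ :=
      fun τ h1 h2 => hpos_before τ (le_trans hs₀_pos.le h1) h2
    -- bound on ‖e‖ and ‖v‖ before t₁
    have he_bdd : ∀ τ : ℝ, 0 ≤ τ → τ < t₁ → ‖e τ‖ ≤ ‖e 0‖ := by
      intro τ h1 h2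
      have := g_decay 0 τ le_rfl
        (fun σ hσ1 hσ2 => hpos_before σ hσ1.le (lt_of_lt_of_le hσ2 h2.le)) τ h1 le_rfl
      rw [hg_norm, hg_norm] at this
      exact le_of_pow_le_pow_left₀ (by norm_num) (norm_nonneg _) this
    set Mv : ℝ := D₁ + ‖e 0‖ with hMv_def
    have hMv_pos : 0 < Mv := by positivity
    have hv_bdd : ∀ τ : ℝ, 0 ≤ τ → τ < t₁ → ‖v τ‖ ≤ Mv := by
      intro τ h1 h2
      have hvs : v τ = ν (x τ) + e τ := by simp [he_def]
      calc ‖v τ‖ = ‖ν (x τ) + e τ‖ := by rw [← hvs]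
        _ ≤ ‖ν (x τ)‖ + ‖e τ‖ := norm_add_le _ _
        _ ≤ D₁ + ‖e 0‖ :=
            add_le_add (hν_bdd (x τ) (hx_sphere τ h1) (hpos_before τ h1 h2))
              (he_bdd τ h1 h2)
    set M : ℝ := D_d * Mv + 1 with hM_def
    have hM_pos : 0 < M := by positivity
    -- f τ ≤ M * (t₁ - τ) on [s₀, t₁]
    have hf_lin : ∀ τ : ℝ, s₀ ≤ τ → τ ≤ t₁ → f τ ≤ M * (t₁ - τ) := by
      intro τ h1 h2
      have hkey := Convex.mul_sub_le_image_sub_of_le_deriv (convex_Icc s₀ t₁)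
        (hf_cont.mono (fun s hs => le_trans hs₀_pos.le hs.1))
        (by
          rw [interior_Icc]
          intro s hs
          exact ((hf_deriv s (le_trans hs₀_pos.le hs.1.le)
            (hf_pos s hs.1.le hs.2)
            (le_of_lt (lt_of_lt_of_le (hf_small s hs.1.le hs.2.le) hε₂δu.le))).differentiableAt).differentiableWithinAt)
        (C := -M)
        (by
          rw [interior_Icc]
          intro s hs
          have hs0 : (0:ℝ) ≤ s := le_trans hs₀_pos.le hs.1.le
          rw [(hf_deriv s hs0 (hf_pos s hs.1.le hs.2)
            (le_of_lt (lt_of_lt_of_le (hf_small s hs.1.le hs.2.le) hε₂δu.le))).deriv]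
          have h3 := hub s hs0 (hf_pos s hs.1.le hs.2)
            (le_of_lt (lt_of_lt_of_le (hf_small s hs.1.le hs.2.le) hε₂δu.le))
          have h4 : ‖v s‖ ≤ Mv := hv_bdd s hs0 hs.2
          have h5 : D_d * ‖v s‖ ≤ D_d * Mv := mul_le_mul_of_nonneg_left h4 hDd.le
          linarith)
        τ ⟨h1, h2⟩ t₁ ⟨hs₀_lt.le, le_refl _⟩ h2
      -- hkey : -M * (t₁ - τ) ≤ f t₁ - f τ
      linarith
    -- the weight function G
    set c1 : ℝ := 2 * k / M with hc1_def
    have hc1 : 0 < c1 := by positivity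
    set G : ℝ → ℝ := fun τ => g τ * (t₁ - τ) ^ (-c1) with hG_def
    have hG_deriv : ∀ s : ℝ, s₀ < s → s < t₁ →
        HasDerivAt G ((-(2 * (k * b (f s))) * g s) * (t₁ - s) ^ (-c1)
          + g s * (c1 * (t₁ - s) ^ (-c1 - 1))) s := by
      intro s hs1 hs2
      have hy : 0 < t₁ - s := by linarith
      have h1 : HasDerivAt (fun τ : ℝ => t₁ - τ) (-1) s := by
        simpa using (hasDerivAt_id s).const_sub t₁
      have h2 : HasDerivAt (fun y : ℝ => y ^ (-c1)) (-c1 * (t₁ - s) ^ (-c1 - 1)) (t₁ - s) :=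
        Real.hasDerivAt_rpow_const (Or.inl hy.ne')
      have h3 := h2.comp s h1
      have h4 : HasDerivAt (fun τ : ℝ => (t₁ - τ) ^ (-c1)) (c1 * (t₁ - s) ^ (-c1 - 1)) s := by
        exact h3.congr_deriv (by ring)
      exact (hg_deriv s (le_trans hs₀_pos.le hs1.le)).mul h4
    have hG_anti : AntitoneOn G (Set.Ico s₀ t₁) := by
      apply antitoneOn_of_deriv_nonpos (convex_Ico s₀ t₁)
      · apply ContinuousOn.mul (hg_cont.mono fun s hs => le_trans hs₀_pos.le hs.1)
        intro s hs
        have hy : t₁ - s ≠ 0 := sub_ne_zero.mpr (ne_of_gt hs.2)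
        exact ((Real.continuousAt_rpow_const (t₁ - s) (-c1) (Or.inl hy)).comp
          ((continuous_const.sub continuous_id).continuousAt)).continuousWithinAt
      · intro s hs
        rw [interior_Ico] at hs
        exact ((hG_deriv s hs.1 hs.2).differentiableAt).differentiableWithinAt
      · intro s hs
        rw [interior_Ico] at hs
        rw [(hG_deriv s hs.1 hs.2).deriv]
        have hy : 0 < t₁ - s := by have := hs.2; linarith
        have hfpos := hf_pos s hs.1.le hs.2
        have hfε : f s < ε₂ := hf_small s hs.1.le hs.2.le
        have hbeq : b (f s) = 1 / f s :=
          hb_eq _ hfpos (le_of_lt (lt_of_lt_of_le hfε hε₂ε₁))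
        have hflin : f s ≤ M * (t₁ - s) := hf_lin s hs.1.le hs.2.le
        have hw : (t₁ - s) ^ (-c1 - 1) * (t₁ - s) = (t₁ - s) ^ (-c1) := by
          calc (t₁ - s) ^ (-c1 - 1) * (t₁ - s)
              = (t₁ - s) ^ (-c1 - 1) * (t₁ - s) ^ (1:ℝ) := by rw [Real.rpow_one]
            _ = (t₁ - s) ^ (-c1 - 1 + 1) := (Real.rpow_add hy _ _).symm
            _ = (t₁ - s) ^ (-c1) := by norm_num
        have hu_nonneg : (0:ℝ) ≤ (t₁ - s) ^ (-c1 - 1) := Real.rpow_nonneg hy.le _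
        have hkey : c1 * f s ≤ 2 * k * (t₁ - s) := by
          have h5 : c1 * f s ≤ c1 * (M * (t₁ - s)) := mul_le_mul_of_nonneg_left hflin hc1.le
          have h6 : c1 * (M * (t₁ - s)) = 2 * k * (t₁ - s) := by
            rw [hc1_def]; field_simp
          linarith
        rw [hbeq]
        have hfs_ne : f s ≠ 0 := hfpos.ne'
        have hmul : f s * ((-(2 * (k * (1 / f s))) * g s) * (t₁ - s) ^ (-c1)
            + g s * (c1 * (t₁ - s) ^ (-c1 - 1)))
            = (g s * (t₁ - s) ^ (-c1 - 1)) * (c1 * f s - 2 * k * (t₁ - s)) := by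
          rw [← hw]; field_simp; ring
        have hgu : 0 ≤ g s * (t₁ - s) ^ (-c1 - 1) := mul_nonneg (hg_nonneg s) hu_nonneg
        have hmain : f s * ((-(2 * (k * (1 / f s))) * g s) * (t₁ - s) ^ (-c1)
            + g s * (c1 * (t₁ - s) ^ (-c1 - 1))) ≤ 0 := by
          rw [hmul]
          exact mul_nonpos_of_nonneg_of_nonpos hgu (by linarith)
        exact le_of_mul_le_mul_left (by simpa using hmain) hfpos
    -- consequence: explicit decay bound for g before t₁
    have hGb : ∀ τ : ℝ, s₀ ≤ τ → τ < t₁ → g τ ≤ G s₀ * (t₁ - τ) ^ c1 := by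
      intro τ h1 h2
      have h3 : G τ ≤ G s₀ := hG_anti ⟨le_refl s₀, hs₀_lt⟩ ⟨h1, h2⟩ h1
      have hy : 0 < t₁ - τ := by linarith
      have hwpos : 0 < (t₁ - τ) ^ c1 := Real.rpow_pos_of_pos hy _
      have h4 : G τ * (t₁ - τ) ^ c1 ≤ G s₀ * (t₁ - τ) ^ c1 :=
        mul_le_mul_of_nonneg_right h3 hwpos.le
      have hcancel : (t₁ - τ) ^ (-c1) * (t₁ - τ) ^ c1 = 1 := by
        rw [← Real.rpow_add hy]; norm_num
      calc g τ = g τ * ((t₁ - τ) ^ (-c1) * (t₁ - τ) ^ c1) := by rw [hcancel, mul_one]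
        _ = G τ * (t₁ - τ) ^ c1 := by rw [hG_def]; ring
        _ ≤ G s₀ * (t₁ - τ) ^ c1 := h4
    -- choose t' close to t₁ where g is small
    set θ : ℝ := (μ / (2 * D_d)) ^ 2 with hθ_def
    have hθpos : 0 < θ := by positivity
    set A' : ℝ := max (G s₀) 1 with hA'_def
    have hA'1 : (1:ℝ) ≤ A' := le_max_right _ _
    have hA'pos : 0 < A' := lt_of_lt_of_le one_pos hA'1
    set y₀ : ℝ := min (t₁ - s₀) ((θ / (2 * A')) ^ (c1⁻¹)) with hy₀_def
    have hy₀pos : 0 < y₀ :=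
      lt_min (by linarith) (Real.rpow_pos_of_pos (by positivity) _)
    set t' : ℝ := t₁ - y₀ / 2 with ht'_def
    have hy₀le : y₀ ≤ t₁ - s₀ := min_le_left _ _
    have ht's₀ : s₀ ≤ t' := by rw [ht'_def]; linarith
    have ht'lt : t' < t₁ := by rw [ht'_def]; linarith
    have ht'0 : 0 ≤ t' := le_trans hs₀_pos.le ht's₀
    have hgt' : g t' ≤ θ / 2 := by
      have h1 : g t' ≤ G s₀ * (t₁ - t') ^ c1 := hGb t' ht's₀ ht'lt
      have ht₁t' : t₁ - t' = y₀ / 2 := by rw [ht'_def]; ring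
      have h2 : (y₀ / 2) ^ c1 ≤ y₀ ^ c1 :=
        Real.rpow_le_rpow (by positivity) (by linarith) hc1.le
      have h3 : y₀ ^ c1 ≤ ((θ / (2 * A')) ^ (c1⁻¹)) ^ c1 :=
        Real.rpow_le_rpow hy₀pos.le (min_le_right _ _) hc1.le
      have h4 : ((θ / (2 * A')) ^ (c1⁻¹)) ^ c1 = θ / (2 * A') := by
        rw [← Real.rpow_mul (by positivity : (0:ℝ) ≤ θ / (2 * A')),
          inv_mul_cancel₀ hc1.ne', Real.rpow_one]
      calc g t' ≤ G s₀ * (t₁ - t') ^ c1 := h1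
        _ = G s₀ * (y₀ / 2) ^ c1 := by rw [ht₁t']
        _ ≤ A' * (θ / (2 * A')) := by
            have h5 : (y₀ / 2) ^ c1 ≤ θ / (2 * A') := by
              calc (y₀ / 2) ^ c1 ≤ y₀ ^ c1 := h2
                _ ≤ ((θ / (2 * A')) ^ (c1⁻¹)) ^ c1 := h3
                _ = θ / (2 * A') := h4
            exact mul_le_mul (le_max_left _ _) h5
              (Real.rpow_nonneg (by positivity) _) hA'pos.le
        _ = θ / 2 := by field_simp
    -- e is small on [t', t₁)
    have he_small : ∀ τ : ℝ, t' ≤ τ → τ < t₁ → D_d * ‖e τ‖ ≤ μ / 2 := by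
      intro τ hτ1 hτ2
      have hgτ : g τ ≤ g t' :=
        g_decay t' t₁ ht'0 (fun σ h1 h2 => hpos_before σ (le_trans ht'0 h1.le) h2) τ hτ1 hτ2.le
      have hgθ : g τ ≤ θ := le_trans hgτ (by linarith)
      rw [hg_norm, hθ_def] at hgθ
      have hnorm : ‖e τ‖ ≤ μ / (2 * D_d) :=
        le_of_pow_le_pow_left₀ (by norm_num) (by positivity) hgθ
      have h9 : D_d * ‖e τ‖ ≤ D_d * (μ / (2 * D_d)) := mul_le_mul_of_nonneg_left hnorm hDd.le
      have heq : D_d * (μ / (2 * D_d)) = μ / 2 := by field_simp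
      linarith
    -- derivative of f is at least μ/2 on (t', t₁), contradiction with f t₁ ≤ 0
    have hkey := Convex.mul_sub_le_image_sub_of_le_deriv (convex_Icc t' t₁)
      (hf_cont.mono (fun s hs => le_trans ht'0 hs.1))
      (by
        rw [interior_Icc]
        intro s hs
        have hs0 : (0:ℝ) ≤ s := le_trans ht'0 hs.1.le
        have hp := hf_pos s (le_trans ht's₀ hs.1.le) hs.2
        have hu := le_of_lt (lt_of_lt_of_le
          (hf_small s (le_trans ht's₀ hs.1.le) hs.2.le) hε₂δu.le)
        exact ((hf_deriv s hs0 hp hu).differentiableAt).differentiableWithinAt)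
      (C := μ / 2)
      (by
        rw [interior_Icc]
        intro s hs
        have hs0 : (0:ℝ) ≤ s := le_trans ht'0 hs.1.le
        have hp := hf_pos s (le_trans ht's₀ hs.1.le) hs.2
        have hsm := hf_small s (le_trans ht's₀ hs.1.le) hs.2.le
        have hu := le_of_lt (lt_of_lt_of_le hsm hε₂δu.le)
        rw [(hf_deriv s hs0 hp hu).deriv]
        have h7 := hlb s hs0 hp (le_of_lt (lt_of_lt_of_le hsm hε₂δd))
        have h8 := he_small s hs.1.le hs.2
        linarith)
      t' ⟨le_refl t', ht'lt.le⟩ t₁ ⟨ht'lt.le, le_refl t₁⟩ ht'lt.le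
    have hft' := hf_pos t' ht's₀ ht'lt
    have hpos_prod : 0 < μ / 2 * (t₁ - t') := mul_pos (half_pos hμ) (by linarith)
    linarith
  -- exponential decay of g on [0, ∞)
  have hexp_deriv : ∀ s : ℝ, HasDerivAt (fun t => Real.exp (2 * k * t))
      (Real.exp (2 * k * s) * (2 * k)) s := by
    intro s
    have h1 : HasDerivAt (fun t : ℝ => 2 * k * t) (2 * k) s := by
      simpa using (hasDerivAt_id s).const_mul (2 * k)
    exact (Real.hasDerivAt_exp (2 * k * s)).comp s h1
  have hh_anti : AntitoneOn (fun t => g t * Real.exp (2 * k * t)) (Set.Ici (0:ℝ)) := by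
    apply antitoneOn_of_deriv_nonpos (convex_Ici 0)
    · exact hg_cont.mul
        ((Real.continuous_exp.comp (continuous_const.mul continuous_id)).continuousOn)
    · intro s hs
      rw [interior_Ici] at hs
      exact (((hg_deriv s hs.le).mul (hexp_deriv s)).differentiableAt).differentiableWithinAt
    · intro s hs
      rw [interior_Ici] at hs
      have hgm : HasDerivAt (fun t => g t * Real.exp (2 * k * t))
          (-(2 * (k * b (f s))) * g s * Real.exp (2 * k * s) + g s * (Real.exp (2 * k * s) * (2 * k))) s :=
        (hg_deriv s hs.le).mul (hexp_deriv s)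
      rw [hgm.deriv]
      have hb1 : 1 ≤ b (f s) := hb_ge_one _ (claim1 s hs.le)
      nlinarith [mul_nonneg (mul_nonneg (mul_nonneg hk.le (hg_nonneg s))
        (sub_nonneg.mpr hb1)) (Real.exp_pos (2 * k * s)).le]
  set θ : ℝ := (μ / (2 * D_d)) ^ 2 with hθ_def
  have hθpos : 0 < θ := by positivity
  set T₀ : ℝ := max 0 (Real.log ((g 0 + 1) / θ) / (2 * k)) with hT₀_def
  have hT₀0 : 0 ≤ T₀ := le_max_left _ _
  have harg_pos : 0 < (g 0 + 1) / θ := by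
    have := hg_nonneg 0
    positivity
  have he_small2 : ∀ t : ℝ, T₀ ≤ t → D_d * ‖e t‖ ≤ μ / 2 := by
    intro t ht
    have ht0 : (0:ℝ) ≤ t := le_trans hT₀0 ht
    have hgd : g t * Real.exp (2 * k * t) ≤ g 0 * Real.exp (2 * k * 0) :=
      hh_anti (Set.self_mem_Ici) ht0 ht0
    rw [mul_zero, Real.exp_zero, mul_one] at hgd
    have hlog : Real.log ((g 0 + 1) / θ) ≤ 2 * k * t := by
      have h1 : Real.log ((g 0 + 1) / θ) / (2 * k) ≤ t := le_trans (le_max_right _ _) ht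
      have h2 : 0 < 2 * k := by positivity
      calc Real.log ((g 0 + 1) / θ)
          = 2 * k * (Real.log ((g 0 + 1) / θ) / (2 * k)) := by field_simp
        _ ≤ 2 * k * t := mul_le_mul_of_nonneg_left h1 h2.le
    have hexp_ge : (g 0 + 1) / θ ≤ Real.exp (2 * k * t) := by
      calc (g 0 + 1) / θ = Real.exp (Real.log ((g 0 + 1) / θ)) :=
            (Real.exp_log harg_pos).symm
        _ ≤ Real.exp (2 * k * t) := Real.exp_le_exp.mpr hlog
    have h1 : g t * ((g 0 + 1) / θ) ≤ g 0 :=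
      le_trans (mul_le_mul_of_nonneg_left hexp_ge (hg_nonneg t)) hgd
    have h2 : g t * (g 0 + 1) ≤ g 0 * θ := by
      have h3 := mul_le_mul_of_nonneg_right h1 hθpos.le
      rw [mul_assoc, div_mul_cancel₀ _ hθpos.ne'] at h3
      exact h3
    have hgθ : g t ≤ θ := by nlinarith [hg_nonneg 0, hg_nonneg t, hθpos]
    rw [hg_norm, hθ_def] at hgθ
    have hnorm : ‖e t‖ ≤ μ / (2 * D_d) :=
      le_of_pow_le_pow_left₀ (by norm_num) (by positivity) hgθ
    have h9 : D_d * ‖e t‖ ≤ D_d * (μ / (2 * D_d)) := mul_le_mul_of_nonneg_left hnorm hDd.le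
    have heq : D_d * (μ / (2 * D_d)) = μ / 2 := by field_simp
    linarith
  -- whenever f ≤ δ_d after time T₀, the derivative of f is at least μ/2
  have hderiv_ge : ∀ s : ℝ, T₀ ≤ s → f s ≤ δ_d → μ / 2 ≤ deriv f s := by
    intro s hs hle
    have hs0 : (0:ℝ) ≤ s := le_trans hT₀0 hs
    have hp := claim1 s hs0
    rw [(hf_deriv s hs0 hp (le_trans hle hδdu)).deriv]
    have h7 := hlb s hs0 hp hle
    have h8 := he_small2 s hs
    linarith
  set T : ℝ := T₀ + 2 * δ_d / μ + 1 with hT_def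
  have hQpos : 0 < 2 * δ_d / μ := by positivity
  have hTT₀ : T₀ ≤ T := by rw [hT_def]; linarith
  have hT0 : 0 ≤ T := le_trans hT₀0 hTT₀
  -- f reaches δ_d somewhere in [T₀, T]
  have hreach : ∃ t₂ : ℝ, T₀ ≤ t₂ ∧ t₂ ≤ T ∧ δ_d ≤ f t₂ := by
    by_contra hno
    push_neg at hno
    have hkey := Convex.mul_sub_le_image_sub_of_le_deriv (convex_Icc T₀ T)
      (hf_cont.mono (fun s hs => le_trans hT₀0 hs.1))
      (by
        rw [interior_Icc]
        intro s hs
        have hs0 : (0:ℝ) ≤ s := le_trans hT₀0 hs.1.le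
        have hlt := hno s hs.1.le hs.2.le
        exact ((hf_deriv s hs0 (claim1 s hs0)
          (le_trans hlt.le hδdu)).differentiableAt).differentiableWithinAt)
      (C := μ / 2)
      (by
        rw [interior_Icc]
        intro s hs
        exact hderiv_ge s hs.1.le (hno s hs.1.le hs.2.le).le)
      T₀ ⟨le_refl T₀, hTT₀⟩ T ⟨hTT₀, le_refl T⟩ hTT₀
    have h1 : μ / 2 * (T - T₀) = δ_d + μ / 2 := by
      rw [hT_def]; field_simp; ring
    have h2 := claim1 T₀ hT₀0
    have h3 := hno T hTT₀ le_rfl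
    linarith
  obtain ⟨t₂, ht₂1, ht₂2, ht₂3⟩ := hreach
  refine ⟨T, hT0, ?_⟩
  intro t hTt
  by_contra hlt
  push_neg at hlt
  have ht₂t : t₂ ≤ t := le_trans ht₂2 hTt
  have ht₂0 : (0:ℝ) ≤ t₂ := le_trans hT₀0 ht₂1
  set S2 : Set ℝ := Set.Icc t₂ t ∩ f ⁻¹' Set.Ici δ_d with hS2_def
  have hS2closed : IsClosed S2 :=
    (hf_cont.mono (fun s hs => le_trans ht₂0 hs.1)).preimage_isClosed_of_isClosed
      isClosed_Icc isClosed_Ici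
  have hS2ne : S2.Nonempty := ⟨t₂, ⟨le_refl t₂, ht₂t⟩, ht₂3⟩
  have hS2bdd : BddAbove S2 := ⟨t, fun s hs => hs.1.2⟩
  set s : ℝ := sSup S2 with hs_def
  have hsS2 : s ∈ S2 := hS2closed.csSup_mem hS2ne hS2bdd
  have hs1 : t₂ ≤ s := hsS2.1.1
  have hs2 : s ≤ t := hsS2.1.2
  have hs3 : δ_d ≤ f s := hsS2.2
  have hst : s < t := by
    rcases lt_or_eq_of_le hs2 with h | h
    · exact h
    · exact absurd hs3 (by rw [h]; exact not_le.mpr hlt)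
  have hafter : ∀ τ : ℝ, s < τ → τ ≤ t → f τ < δ_d := by
    intro τ h1 h2
    by_contra hge
    push_neg at hge
    have : τ ∈ S2 := ⟨⟨le_trans hs1 h1.le, h2⟩, hge⟩
    exact absurd (le_csSup hS2bdd this) (not_le.mpr h1)
  have hsT₀ : T₀ ≤ s := le_trans ht₂1 hs1
  have hs0 : (0:ℝ) ≤ s := le_trans hT₀0 hsT₀
  have hkey := Convex.mul_sub_le_image_sub_of_le_deriv (convex_Icc s t)
    (hf_cont.mono (fun σ hσ => le_trans hs0 hσ.1))
    (by
      rw [interior_Icc]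
      intro σ hσ
      have hσ0 : (0:ℝ) ≤ σ := le_trans hs0 hσ.1.le
      have hltσ := hafter σ hσ.1 hσ.2.le
      exact ((hf_deriv σ hσ0 (claim1 σ hσ0)
        (le_trans hltσ.le hδdu)).differentiableAt).differentiableWithinAt)
    (C := μ / 2)
    (by
      rw [interior_Icc]
      intro σ hσ
      exact hderiv_ge σ (le_trans hsT₀ hσ.1.le) (hafter σ hσ.1 hσ.2.le).le)
    s ⟨le_refl s, hst.le⟩ t ⟨hst.le, le_refl t⟩ hst.le
  have hpos_prod : 0 ≤ μ / 2 * (t - s) := mul_nonneg (half_pos hμ).le (by linarith)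
  linarith
end

section
/- Let x, v : [0,∞) → E be continuously differentiable curves with ‖x(t)‖ = 1 for all t ≥ 0, satisfying x'(t) = P(x(t)) v(t) and v'(t) = u(t), where the control input is u(t) = -k·b(d(x(t))) • (v(t) - ν(x(t))) + (Dν(x(t)))(P(x(t)) v(t)) with k > 0. Assume hypotheses (i)–(vii) of Claim 2 of Lemma 1 (d continuous on the sphere and differentiable with ‖P∇d‖ ≤ D_d where 0 < d ≤ δ_u, ⟪∇d, ν⟫ ≥ μ where 0 < d ≤ δ_d, ν tangent with ‖ν‖ ≤ D₁ on {d > 0}, b(s) = 1/s on (0, ε₁] and b(s) ≥ 1 for s > 0, d(x(0)) > 0), and in addition: b is continuous on (0, ∞); ν is continuously differentiable on the open set of unit vectors y with d(y) > 0; and ‖Dν(y)‖ ≤ D₂ for every unit y with d(y) ≥ δ_d. Then there exists a constant C > 0, depending on the initial condition (x(0), v(0)), such that ‖u(t)‖ ≤ C for all t ≥ 0. -/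
open scoped RealInnerProductSpace

lemma norm_hasDerivAt {F : Type*} [NormedAddCommGroup F] [InnerProductSpace ℝ F]
    {f : ℝ → F} {c : ℝ} {t : ℝ} (hf : HasDerivAt f (c • f t) t) :
    HasDerivAt (fun s => ‖f s‖) (c * ‖f t‖) t := by
  rcases eq_or_ne (f t) 0 with h0 | h0
  · rw [hasDerivAt_iff_isLittleO] at hf ⊢
    simp only [h0, norm_zero, smul_zero, sub_zero, smul_eq_mul, mul_zero] at hf ⊢
    calc (fun s => ‖f s‖) =O[nhds t] (fun s => f s) := by
          exact (Asymptotics.isBigO_refl (fun s => f s) _).norm_left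
    _ =o[nhds t] (fun s => s - t) := hf
  · have hpos : 0 < ‖f t‖ := norm_pos_iff.mpr h0
    have hq : HasDerivAt (fun s => ⟪f s, f s⟫) (2 * c * (‖f t‖ * ‖f t‖)) t := by
      have := (HasDerivAt.inner ℝ hf hf)
      refine this.congr_deriv ?_
      rw [real_inner_smul_left, real_inner_smul_right, real_inner_self_eq_norm_mul_norm]
      ring
    have hsq : HasDerivAt (fun s => Real.sqrt ⟪f s, f s⟫) (c * ‖f t‖) t := by
      have hne : ⟪f t, f t⟫ ≠ 0 := by
        rw [real_inner_self_eq_norm_mul_norm]; positivity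
      have := (Real.hasDerivAt_sqrt hne).comp t hq
      refine this.congr_deriv ?_
      rw [real_inner_self_eq_norm_mul_norm, Real.sqrt_mul_self (norm_nonneg _)]
      have : ‖f t‖ ≠ 0 := norm_ne_zero_iff.mpr h0
      field_simp
    convert hsq using 1
    funext s
    rw [real_inner_self_eq_norm_mul_norm, Real.sqrt_mul_self (norm_nonneg _)]

lemma sproj_adjoint {F : Type*} [NormedAddCommGroup F] [InnerProductSpace ℝ F]
    (x w e : F) : ⟪w, sproj x e⟫ = ⟪sproj x w, e⟫ := by
  simp only [sproj, inner_sub_left, inner_sub_right, real_inner_smul_left,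
    real_inner_smul_right]
  rw [real_inner_comm x w]
  ring

lemma sproj_norm_le {F : Type*} [NormedAddCommGroup F] [InnerProductSpace ℝ F]
    {x : F} (hx : ‖x‖ = 1) (e : F) : ‖sproj x e‖ ≤ ‖e‖ := by
  have h : ‖sproj x e‖ ^ 2 ≤ ‖e‖ ^ 2 := by
    have heq : ‖sproj x e‖ ^ 2 = ‖e‖ ^ 2 - ⟪x, e⟫ ^ 2 := by
      rw [sproj, ← real_inner_self_eq_norm_sq, ← real_inner_self_eq_norm_sq]
      simp only [inner_sub_left, inner_sub_right, real_inner_smul_left, real_inner_smul_right,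
        real_inner_self_eq_norm_sq, hx, norm_smul, Real.norm_eq_abs, mul_pow, sq_abs, mul_one,
        one_pow]
      rw [real_inner_comm e x]
      ring
    nlinarith [sq_nonneg ⟪x, e⟫]
  nlinarith [norm_nonneg (sproj x e), norm_nonneg e]

lemma monoOn_icc {f f' : ℝ → ℝ} {a bb : ℝ} (hf : ContinuousOn f (Set.Icc a bb))
    (hd : ∀ t ∈ Set.Ioo a bb, HasDerivAt f (f' t) t)
    (h0 : ∀ t ∈ Set.Ioo a bb, 0 ≤ f' t) : MonotoneOn f (Set.Icc a bb) := by
  apply monotoneOn_of_deriv_nonneg (convex_Icc a bb) hf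
  · intro t ht; rw [interior_Icc] at ht
    exact (hd t ht).differentiableAt.differentiableWithinAt
  · intro t ht; rw [interior_Icc] at ht
    rw [(hd t ht).deriv]; exact h0 t ht

lemma antiOn_icc {f f' : ℝ → ℝ} {a bb : ℝ} (hf : ContinuousOn f (Set.Icc a bb))
    (hd : ∀ t ∈ Set.Ioo a bb, HasDerivAt f (f' t) t)
    (h0 : ∀ t ∈ Set.Ioo a bb, f' t ≤ 0) : AntitoneOn f (Set.Icc a bb) := by
  apply antitoneOn_of_deriv_nonpos (convex_Icc a bb) hf
  · intro t ht; rw [interior_Icc] at ht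
    exact (hd t ht).differentiableAt.differentiableWithinAt
  · intro t ht; rw [interior_Icc] at ht
    rw [(hd t ht).deriv]; exact h0 t ht

lemma antiOn_ici {f f' : ℝ → ℝ} {a : ℝ} (hf : ContinuousOn f (Set.Ici a))
    (hd : ∀ t ∈ Set.Ioi a, HasDerivAt f (f' t) t)
    (h0 : ∀ t ∈ Set.Ioi a, f' t ≤ 0) : AntitoneOn f (Set.Ici a) := by
  apply antitoneOn_of_deriv_nonpos (convex_Ici a) hf
  · intro t ht; rw [interior_Ici] at ht
    exact (hd t ht).differentiableAt.differentiableWithinAt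
  · intro t ht; rw [interior_Ici] at ht
    rw [(hd t ht).deriv]; exact h0 t ht

set_option maxHeartbeats 4000000 in
/-- Claim 3 of Lemma 1: the control input remains bounded along every
closed-loop trajectory, even though the damping gain blows up at the
constraint boundary. -/
theorem safety_claim3
    (n : ℕ)
    (d : EuclideanSpace ℝ (Fin (n+1)) → ℝ)
    (ν : EuclideanSpace ℝ (Fin (n+1)) → EuclideanSpace ℝ (Fin (n+1)))
    (b : ℝ → ℝ)
    (μ D_d D₁ D₂ δ_d δ_u ε₁ k : ℝ)
    (hμ : 0 < μ) (hDd : 0 < D_d) (hD₁ : 0 < D₁) (hD₂ : 0 < D₂)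
    (hδd : 0 < δ_d) (hδdu : δ_d ≤ δ_u) (hε₁ : 0 < ε₁) (hε₁u : ε₁ < δ_u)
    (hk : 0 < k)
    (x v : ℝ → EuclideanSpace ℝ (Fin (n+1)))
    -- x and v are continuously differentiable on [0, ∞)
    (hx_smooth : ContDiffOn ℝ 1 x (Set.Ici (0:ℝ)))
    (hv_smooth : ContDiffOn ℝ 1 v (Set.Ici (0:ℝ)))
    -- x evolves on the unit sphere
    (hx_sphere : ∀ t : ℝ, 0 ≤ t → ‖x t‖ = 1)
    -- closed-loop dynamics: x' = P(x) v
    (hx_ode : ∀ t : ℝ, 0 ≤ t → HasDerivAt x (sproj (x t) (v t)) t)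
    -- v' = -k b(d(x)) (v - ν(x)) + Dν(x) (P(x) v)
    (hv_ode : ∀ t : ℝ, 0 ≤ t →
      HasDerivAt v
        (-(k * b (d (x t))) • (v t - ν (x t)) +
          fderiv ℝ ν (x t) (sproj (x t) (v t))) t)
    -- (i) d continuous on the unit sphere, differentiable near the unsafe set,
    -- and chain rule along the curve
    (hd_cont : ContinuousOn d (Metric.sphere (0 : EuclideanSpace ℝ (Fin (n+1))) 1))
    (hd_diff : ∀ y : EuclideanSpace ℝ (Fin (n+1)), ‖y‖ = 1 →
      0 < d y → d y ≤ δ_u → DifferentiableAt ℝ d y)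
    (hd_chain : ∀ t : ℝ, 0 ≤ t → 0 < d (x t) → d (x t) ≤ δ_u →
      HasDerivAt (fun s => d (x s)) ⟪gradient d (x t), sproj (x t) (v t)⟫ t)
    -- (ii) bounded projected gradient near the unsafe set
    (hgrad_bdd : ∀ y : EuclideanSpace ℝ (Fin (n+1)), ‖y‖ = 1 →
      0 < d y → d y ≤ δ_u → ‖sproj y (gradient d y)‖ ≤ D_d)
    -- (iii) the desired vector field points away from the unsafe set
    (hmove : ∀ y : EuclideanSpace ℝ (Fin (n+1)), ‖y‖ = 1 →
      0 < d y → d y ≤ δ_d → μ ≤ ⟪gradient d y, ν y⟫)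
    -- (iv) ν is tangent and bounded on the free space
    (hν_tangent : ∀ y : EuclideanSpace ℝ (Fin (n+1)), ‖y‖ = 1 → 0 < d y → ⟪y, ν y⟫ = 0)
    (hν_bdd : ∀ y : EuclideanSpace ℝ (Fin (n+1)), ‖y‖ = 1 → 0 < d y → ‖ν y‖ ≤ D₁)
    -- (v) damping profile
    (hb_eq : ∀ s : ℝ, 0 < s → s ≤ ε₁ → b s = 1 / s)
    (hb_ge_one : ∀ s : ℝ, 0 < s → 1 ≤ b s)
    -- (vi) ν differentiable along the trajectory
    (hν_diff : ∀ t : ℝ, 0 ≤ t → DifferentiableAt ℝ ν (x t))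
    -- additional regularity: b continuous on (0, ∞)
    (hb_cont : ContinuousOn b (Set.Ioi (0:ℝ)))
    -- ν continuously differentiable on the free part of the sphere
    (hν_smooth : ContDiffOn ℝ 1 ν {y : EuclideanSpace ℝ (Fin (n+1)) | ‖y‖ = 1 ∧ 0 < d y})
    -- bounded Jacobian of ν away from the unsafe set
    (hJ_bdd : ∀ y : EuclideanSpace ℝ (Fin (n+1)), ‖y‖ = 1 → δ_d ≤ d y →
      ‖fderiv ℝ ν y‖ ≤ D₂)
    -- initial condition in the free space
    (h0 : 0 < d (x 0)) :
    ∃ C : ℝ, 0 < C ∧ ∀ t : ℝ, 0 ≤ t →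
      ‖-(k * b (d (x t))) • (v t - ν (x t)) +
        fderiv ℝ ν (x t) (sproj (x t) (v t))‖ ≤ C := by
  have hxsph : ∀ t : ℝ, 0 ≤ t →
      x t ∈ Metric.sphere (0 : EuclideanSpace ℝ (Fin (n+1))) 1 := by
    intro t ht; simpa [mem_sphere_zero_iff_norm] using hx_sphere t ht
  have hgcont : ContinuousOn (fun t => d (x t)) (Set.Ici (0:ℝ)) :=
    hd_cont.comp hx_smooth.continuousOn (fun t ht => hxsph t ht)
  have heD : ∀ t : ℝ, 0 ≤ t →
      HasDerivAt (fun s => v s - ν (x s)) ((-(k * b (d (x t)))) • (v t - ν (x t))) t := by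
    intro t ht
    have hν : HasDerivAt (fun s => ν (x s)) (fderiv ℝ ν (x t) (sproj (x t) (v t))) t :=
      (hν_diff t ht).hasFDerivAt.comp_hasDerivAt t (hx_ode t ht)
    have h := (hv_ode t ht).sub hν
    refine h.congr_deriv ?_
    abel
  have heN : ∀ t : ℝ, 0 ≤ t →
      HasDerivAt (fun s => ‖v s - ν (x s)‖) (-(k * b (d (x t))) * ‖v t - ν (x t)‖) t :=
    fun t ht => norm_hasDerivAt (heD t ht)
  have hecont : ContinuousOn (fun s => ‖v s - ν (x s)‖) (Set.Ici (0:ℝ)) :=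
    fun t ht => ((heN t ht).continuousAt).continuousWithinAt
  obtain ⟨E₀, hE₀def⟩ : ∃ y : ℝ, y = ‖v 0 - ν (x 0)‖ := ⟨_, rfl⟩
  have hE₀nn : 0 ≤ E₀ := hE₀def ▸ norm_nonneg _
  obtain ⟨cc, hccdef⟩ : ∃ y : ℝ, y = D_d / k := ⟨_, rfl⟩
  have hccnn : 0 ≤ cc := hccdef ▸ div_nonneg hDd.le hk.le
  obtain ⟨m, hmdef⟩ : ∃ y : ℝ, y = min (d (x 0)) (min ε₁ δ_d) := ⟨_, rfl⟩
  have hm : 0 < m := hmdef ▸ lt_min h0 (lt_min hε₁ hδd)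
  have hmε : m ≤ ε₁ := hmdef ▸ le_trans (min_le_right _ _) (min_le_left _ _)
  have hmδd : m ≤ δ_d := hmdef ▸ le_trans (min_le_right _ _) (min_le_right _ _)
  have hmg0 : m ≤ d (x 0) := hmdef ▸ min_le_left _ _
  obtain ⟨δstar, hδsdef⟩ : ∃ y : ℝ, y = m / 2 * Real.exp (-(cc * E₀)) := ⟨_, rfl⟩
  have hδspos : 0 < δstar := by rw [hδsdef]; positivity
  have hδslt : δstar < m := by
    have h1 : Real.exp (-(cc * E₀)) ≤ 1 := Real.exp_le_one_iff.mpr (by nlinarith)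
    have h2 : 0 < Real.exp (-(cc * E₀)) := Real.exp_pos _
    rw [hδsdef]
    nlinarith
  have hsplit : ∀ s : ℝ, 0 ≤ s → 0 < d (x s) →
      sproj (x s) (v s) = ν (x s) + sproj (x s) (v s - ν (x s)) := by
    intro s hs hpos
    have ht := hν_tangent (x s) (hx_sphere s hs) hpos
    simp only [sproj, inner_sub_right, ht, sub_zero, sub_smul]
    abel
  have hginner : ∀ s : ℝ, 0 ≤ s → 0 < d (x s) → d (x s) ≤ δ_d →
      μ - D_d * ‖v s - ν (x s)‖ ≤ ⟪gradient d (x s), sproj (x s) (v s)⟫ := by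
    intro s hs hpos hled
    have hx1 : ‖x s‖ = 1 := hx_sphere s hs
    rw [hsplit s hs hpos, inner_add_right]
    have h1 : μ ≤ ⟪gradient d (x s), ν (x s)⟫ := hmove _ hx1 hpos hled
    have h2 : -(D_d * ‖v s - ν (x s)‖) ≤ ⟪gradient d (x s), sproj (x s) (v s - ν (x s))⟫ := by
      rw [sproj_adjoint]
      have habs := abs_real_inner_le_norm (sproj (x s) (gradient d (x s))) (v s - ν (x s))
      have hD := hgrad_bdd _ hx1 hpos (le_trans hled hδdu)
      have hmul : ‖sproj (x s) (gradient d (x s))‖ * ‖v s - ν (x s)‖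
          ≤ D_d * ‖v s - ν (x s)‖ := mul_le_mul_of_nonneg_right hD (norm_nonneg _)
      have hneg := neg_abs_le (⟪sproj (x s) (gradient d (x s)), v s - ν (x s)⟫)
      linarith
    linarith
  -- Claim 2: the trajectory stays away from the boundary
  have claim2 : ∀ t : ℝ, 0 ≤ t → δstar < d (x t) := by
    by_contra hcon
    push_neg at hcon
    obtain ⟨tb, htb0, htb⟩ := hcon
    obtain ⟨T, hTdef⟩ : ∃ S : Set ℝ, S = Set.Ici (0:ℝ) ∩ (fun t => d (x t)) ⁻¹' Set.Iic δstar :=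
      ⟨_, rfl⟩
    have hmemT : ∀ s : ℝ, s ∈ T ↔ (0 ≤ s ∧ d (x s) ≤ δstar) := by
      intro s; rw [hTdef]; simp [Set.mem_Ici, Set.mem_Iic]
    have hTcl : IsClosed T := by
      rw [hTdef]; exact hgcont.preimage_isClosed_of_isClosed isClosed_Ici isClosed_Iic
    have hTne : T.Nonempty := ⟨tb, (hmemT tb).mpr ⟨htb0, htb⟩⟩
    have hTbd : BddBelow T := ⟨0, fun u hu => ((hmemT u).mp hu).1⟩
    obtain ⟨t₂, ht₂def⟩ : ∃ y : ℝ, y = sInf T := ⟨_, rfl⟩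
    have ht₂T : t₂ ∈ T := ht₂def ▸ hTcl.csInf_mem hTne hTbd
    have ht₂0 : 0 ≤ t₂ := ((hmemT t₂).mp ht₂T).1
    have ht₂le : d (x t₂) ≤ δstar := ((hmemT t₂).mp ht₂T).2
    have hbefore : ∀ s : ℝ, 0 ≤ s → s < t₂ → δstar < d (x s) := by
      intro s hs hst
      by_contra hle
      push_neg at hle
      have : t₂ ≤ s := ht₂def ▸ csInf_le hTbd ((hmemT s).mpr ⟨hs, hle⟩)
      exact absurd this (not_le.mpr hst)
    have hg0 : δstar < d (x 0) := lt_of_lt_of_le hδslt hmg0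
    have ht₂pos : 0 < t₂ := by
      rcases ht₂0.lt_or_eq with h | h
      · exact h
      · exfalso; rw [← h] at ht₂le; linarith
    have hgt₂ge : δstar ≤ d (x t₂) := by
      have hclos : t₂ ∈ closure (Set.Ico 0 t₂) := by
        rw [closure_Ico (ne_of_lt ht₂pos)]
        exact ⟨ht₂0, le_refl _⟩
      haveI : (nhdsWithin t₂ (Set.Ico 0 t₂)).NeBot := mem_closure_iff_nhdsWithin_neBot.mp hclos
      have hcw : ContinuousWithinAt (fun t => d (x t)) (Set.Ico 0 t₂) t₂ :=
        ((hgcont t₂ ht₂0).mono (fun s hs => hs.1))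
      refine ge_of_tendsto hcw ?_
      exact Filter.eventually_of_mem self_mem_nhdsWithin (fun s hs => (hbefore s hs.1 hs.2).le)
    have hgpos : ∀ s : ℝ, 0 ≤ s → s ≤ t₂ → 0 < d (x s) := by
      intro s hs hst
      rcases hst.lt_or_eq with h | h
      · exact lt_trans hδspos (hbefore s hs h)
      · rw [h]; exact lt_of_lt_of_le hδspos hgt₂ge
    have hIccsub : Set.Icc (0:ℝ) t₂ ⊆ Set.Ici (0:ℝ) := fun s hs => hs.1
    have henorm : ∀ s : ℝ, 0 ≤ s → s ≤ t₂ → ‖v s - ν (x s)‖ ≤ E₀ := by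
      have hanti : AntitoneOn (fun s => ‖v s - ν (x s)‖) (Set.Icc 0 t₂) := by
        apply antiOn_icc (f' := fun s => -(k * b (d (x s))) * ‖v s - ν (x s)‖)
          (hecont.mono hIccsub)
        · intro s hs; exact heN s hs.1.le
        · intro s hs
          have hb := hb_ge_one _ (hgpos s hs.1.le hs.2.le)
          have h1 : 0 ≤ ‖v s - ν (x s)‖ := norm_nonneg _
          nlinarith [mul_nonneg (mul_nonneg hk.le (le_trans zero_le_one hb)) h1]
      intro s hs hst
      have h := hanti ⟨le_refl 0, ht₂0⟩ ⟨hs, hst⟩ hs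
      rw [hE₀def]
      exact h
    obtain ⟨A, hAdef⟩ : ∃ S : Set ℝ,
        S = Set.Icc (0:ℝ) t₂ ∩ (fun s => d (x s)) ⁻¹' Set.Ici m := ⟨_, rfl⟩
    have hmemA : ∀ s : ℝ, s ∈ A ↔ ((0 ≤ s ∧ s ≤ t₂) ∧ m ≤ d (x s)) := by
      intro s; rw [hAdef]; simp [Set.mem_Icc, Set.mem_Ici, and_assoc]
    have hAcl : IsClosed A := by
      rw [hAdef]
      exact (hgcont.mono hIccsub).preimage_isClosed_of_isClosed isClosed_Icc isClosed_Ici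
    have hAne : A.Nonempty := ⟨0, (hmemA 0).mpr ⟨⟨le_refl 0, ht₂0⟩, hmg0⟩⟩
    have hAbd : BddAbove A := ⟨t₂, fun u hu => ((hmemA u).mp hu).1.2⟩
    obtain ⟨t₁, ht₁def⟩ : ∃ y : ℝ, y = sSup A := ⟨_, rfl⟩
    have ht₁A : t₁ ∈ A := ht₁def ▸ hAcl.csSup_mem hAne hAbd
    have ht₁0 : 0 ≤ t₁ := ((hmemA t₁).mp ht₁A).1.1
    have ht₁m : m ≤ d (x t₁) := ((hmemA t₁).mp ht₁A).2
    have ht₁lt : t₁ < t₂ := by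
      rcases ((hmemA t₁).mp ht₁A).1.2.lt_or_eq with h | h
      · exact h
      · exfalso; rw [h] at ht₁m; linarith
    have hafter : ∀ s : ℝ, t₁ < s → s ≤ t₂ → d (x s) < m := by
      intro s h1 h2
      by_contra hge; push_neg at hge
      have hmem : s ∈ A := (hmemA s).mpr ⟨⟨le_trans ht₁0 h1.le, h2⟩, hge⟩
      have : s ≤ t₁ := ht₁def ▸ le_csSup hAbd hmem
      exact absurd this (not_le.mpr h1)
    have hsub : Set.Icc t₁ t₂ ⊆ Set.Ici (0:ℝ) := fun s hs => le_trans ht₁0 hs.1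
    have hΨcont : ContinuousOn (fun s => Real.log (d (x s)) - cc * ‖v s - ν (x s)‖)
        (Set.Icc t₁ t₂) := by
      apply ContinuousOn.sub
      · have hcomp : ContinuousOn (Real.log ∘ fun t => d (x t)) (Set.Icc t₁ t₂) :=
          Real.continuousOn_log.comp (hgcont.mono hsub)
            (fun s hs => Set.mem_compl_singleton_iff.mpr (ne_of_gt (hgpos s (hsub hs) hs.2)))
        exact hcomp
      · exact continuousOn_const.mul (hecont.mono hsub)
    have hΨmono : MonotoneOn (fun s => Real.log (d (x s)) - cc * ‖v s - ν (x s)‖)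
        (Set.Icc t₁ t₂) := by
      apply monoOn_icc (f' := fun s =>
        (d (x s))⁻¹ * ⟪gradient d (x s), sproj (x s) (v s)⟫ +
          cc * (k * b (d (x s)) * ‖v s - ν (x s)‖)) hΨcont
      · intro s hs
        have hs0 : 0 ≤ s := le_trans ht₁0 hs.1.le
        have hpos : 0 < d (x s) := hgpos s hs0 hs.2.le
        have hlm : d (x s) < m := hafter s hs.1 hs.2.le
        have hleu : d (x s) ≤ δ_u := le_trans hlm.le (le_trans hmδd hδdu)
        have hlog : HasDerivAt (fun r => Real.log (d (x r)))
            ((d (x s))⁻¹ * ⟪gradient d (x s), sproj (x s) (v s)⟫) s :=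
          HasDerivAt.comp s (Real.hasDerivAt_log (ne_of_gt hpos)) (hd_chain s hs0 hpos hleu)
        have hnorm := (heN s hs0).const_mul cc
        have hder := hlog.sub hnorm
        refine hder.congr_deriv ?_
        ring
      · intro s hs
        have hs0 : 0 ≤ s := le_trans ht₁0 hs.1.le
        have hpos : 0 < d (x s) := hgpos s hs0 hs.2.le
        have hlm : d (x s) < m := hafter s hs.1 hs.2.le
        have hbe : b (d (x s)) = 1 / d (x s) := hb_eq _ hpos (le_trans hlm.le hmε)
        have hgi := hginner s hs0 hpos (le_trans hlm.le hmδd)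
        have hk' : k ≠ 0 := ne_of_gt hk
        have hd' : d (x s) ≠ 0 := ne_of_gt hpos
        rw [hbe]
        have key : (d (x s))⁻¹ * ⟪gradient d (x s), sproj (x s) (v s)⟫ +
            cc * (k * (1 / d (x s)) * ‖v s - ν (x s)‖)
            = (⟪gradient d (x s), sproj (x s) (v s)⟫ + D_d * ‖v s - ν (x s)‖)
              * (d (x s))⁻¹ := by
          rw [hccdef]; field_simp
        rw [key]
        have hsum : 0 ≤ ⟪gradient d (x s), sproj (x s) (v s)⟫ + D_d * ‖v s - ν (x s)‖ := by
          have hnn : 0 ≤ D_d * ‖v s - ν (x s)‖ := mul_nonneg hDd.le (norm_nonneg _)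
          linarith
        exact mul_nonneg hsum (inv_nonneg.mpr hpos.le)
    have hmem₁ : t₁ ∈ Set.Icc t₁ t₂ := ⟨le_refl _, ht₁lt.le⟩
    have hmem₂ : t₂ ∈ Set.Icc t₁ t₂ := ⟨ht₁lt.le, le_refl _⟩
    have hΨ : Real.log (d (x t₁)) - cc * ‖v t₁ - ν (x t₁)‖ ≤
        Real.log (d (x t₂)) - cc * ‖v t₂ - ν (x t₂)‖ := hΨmono hmem₁ hmem₂ ht₁lt.le
    have hlog₁ : Real.log m ≤ Real.log (d (x t₁)) := Real.log_le_log hm ht₁m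
    have he₁ : ‖v t₁ - ν (x t₁)‖ ≤ E₀ := henorm t₁ ht₁0 ht₁lt.le
    have he₁' : cc * ‖v t₁ - ν (x t₁)‖ ≤ cc * E₀ := mul_le_mul_of_nonneg_left he₁ hccnn
    have he₂ : 0 ≤ cc * ‖v t₂ - ν (x t₂)‖ := mul_nonneg hccnn (norm_nonneg _)
    have hlog₂ : Real.log (d (x t₂)) ≤ Real.log δstar :=
      Real.log_le_log (hgpos t₂ ht₂0 le_rfl) ht₂le
    have hδslog : Real.log δstar = Real.log (m/2) + (-(cc*E₀)) := by
      rw [hδsdef, Real.log_mul (by positivity) (Real.exp_ne_zero _), Real.log_exp]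
    have hlt2 : Real.log (m/2) < Real.log m := Real.log_lt_log (by positivity) (by linarith)
    linarith
  -- consequences of Claim 2
  have hgpos' : ∀ t : ℝ, 0 ≤ t → 0 < d (x t) := fun t ht => lt_trans hδspos (claim2 t ht)
  have hb1 : ∀ t : ℝ, 0 ≤ t → 1 ≤ b (d (x t)) := fun t ht => hb_ge_one _ (hgpos' t ht)
  -- exponential decay of the error
  have hdecay : ∀ t : ℝ, 0 ≤ t → ‖v t - ν (x t)‖ ≤ E₀ * Real.exp (-(k * t)) := by
    have hanti : AntitoneOn (fun s => Real.exp (k * s) * ‖v s - ν (x s)‖) (Set.Ici 0) := by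
      apply antiOn_ici (f' := fun s => Real.exp (k * s) * k * ‖v s - ν (x s)‖ +
        Real.exp (k * s) * (-(k * b (d (x s))) * ‖v s - ν (x s)‖))
      · exact ((Real.continuous_exp.comp (continuous_const.mul continuous_id)).continuousOn).mul
          hecont
      · intro s hs
        have hs0 : (0:ℝ) ≤ s := le_of_lt hs
        have hexp : HasDerivAt (fun r => Real.exp (k * r)) (Real.exp (k * s) * k) s := by
          have := (Real.hasDerivAt_exp (k * s)).comp s ((hasDerivAt_id s).const_mul k)
          exact this.congr_deriv (by ring)
        exact hexp.mul (heN s hs0)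
      · intro s hs
        have hs0 : (0:ℝ) ≤ s := le_of_lt hs
        have hb := hb1 s hs0
        have h1 : 0 ≤ ‖v s - ν (x s)‖ := norm_nonneg _
        have h3 : 0 ≤ Real.exp (k * s) * k * ‖v s - ν (x s)‖ := by positivity
        nlinarith [mul_le_mul_of_nonneg_left hb h3]
    intro t ht
    have h := hanti (Set.self_mem_Ici) ht ht
    simp only [mul_zero, Real.exp_zero, one_mul] at h
    rw [← hE₀def] at h
    have h2 : ‖v t - ν (x t)‖ =
        Real.exp (-(k*t)) * (Real.exp (k*t) * ‖v t - ν (x t)‖) := by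
      rw [← mul_assoc, ← Real.exp_add]; simp
    rw [h2]
    calc Real.exp (-(k*t)) * (Real.exp (k*t) * ‖v t - ν (x t)‖)
        ≤ Real.exp (-(k*t)) * E₀ :=
          mul_le_mul_of_nonneg_left h (Real.exp_nonneg _)
      _ = E₀ * Real.exp (-(k*t)) := by ring
  have hE0all : ∀ t : ℝ, 0 ≤ t → ‖v t - ν (x t)‖ ≤ E₀ := by
    intro t ht
    have h1 := hdecay t ht
    have h2 : Real.exp (-(k*t)) ≤ 1 :=
      Real.exp_le_one_iff.mpr (by nlinarith [mul_nonneg hk.le ht])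
    nlinarith [mul_le_mul_of_nonneg_left h2 hE₀nn]
  -- choose T₀ after which the error is small
  obtain ⟨T₀, hT₀0, hT₀⟩ : ∃ T₀ : ℝ, 0 ≤ T₀ ∧ D_d * (E₀ * Real.exp (-(k * T₀))) < μ / 2 := by
    have h1 : Filter.Tendsto (fun t : ℝ => k * t) Filter.atTop Filter.atTop :=
      Filter.Tendsto.const_mul_atTop hk Filter.tendsto_id
    have h2 : Filter.Tendsto (fun t : ℝ => -(k * t)) Filter.atTop Filter.atBot :=
      Filter.tendsto_neg_atTop_atBot.comp h1
    have h3 : Filter.Tendsto (fun t : ℝ => Real.exp (-(k * t))) Filter.atTop (nhds 0) :=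
      Real.tendsto_exp_atBot.comp h2
    have h4 : Filter.Tendsto (fun t : ℝ => D_d * (E₀ * Real.exp (-(k * t))))
        Filter.atTop (nhds 0) := by
      have := ((h3.const_mul E₀).const_mul D_d)
      simpa using this
    have h5 := h4.eventually_lt_const (by positivity : (0:ℝ) < μ / 2)
    obtain ⟨T₀, hT₀⟩ := (h5.and (Filter.eventually_ge_atTop (0:ℝ))).exists
    exact ⟨T₀, hT₀.2, hT₀.1⟩
  have hmu2 : ∀ s : ℝ, T₀ ≤ s → D_d * ‖v s - ν (x s)‖ ≤ μ / 2 := by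
    intro s hsT
    have hs0 : (0:ℝ) ≤ s := le_trans hT₀0 hsT
    have hde := hdecay s hs0
    have hee : Real.exp (-(k*s)) ≤ Real.exp (-(k*T₀)) :=
      Real.exp_le_exp.mpr (by nlinarith [mul_le_mul_of_nonneg_left hsT hk.le])
    have ha1 : D_d * ‖v s - ν (x s)‖ ≤ D_d * (E₀ * Real.exp (-(k*s))) :=
      mul_le_mul_of_nonneg_left hde hDd.le
    have ha2 : D_d * E₀ * Real.exp (-(k*s)) ≤ D_d * E₀ * Real.exp (-(k*T₀)) :=
      mul_le_mul_of_nonneg_left hee (by positivity)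
    nlinarith
  -- the trajectory eventually reaches {d ≥ δ_d}
  obtain ⟨T₁, hT₁T₀, hT₁⟩ : ∃ T₁ : ℝ, T₀ ≤ T₁ ∧ δ_d ≤ d (x T₁) := by
    by_contra hcon
    push_neg at hcon
    obtain ⟨X, hXdef⟩ : ∃ y : ℝ, y = T₀ + 2 * δ_d / μ := ⟨_, rfl⟩
    have hX : T₀ ≤ X := by
      rw [hXdef]
      have : 0 ≤ 2 * δ_d / μ := by positivity
      linarith
    have hmono : MonotoneOn (fun s => d (x s) - μ/2 * s) (Set.Icc T₀ X) := by
      apply monoOn_icc (f' := fun s => ⟪gradient d (x s), sproj (x s) (v s)⟫ - μ/2)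
      · apply ContinuousOn.sub
        · exact hgcont.mono (fun s hs => le_trans hT₀0 hs.1)
        · exact (continuousOn_const.mul continuousOn_id)
      · intro s hs
        have hs0 : (0:ℝ) ≤ s := le_trans hT₀0 hs.1.le
        have hpos := hgpos' s hs0
        have hlt := hcon s hs.1.le
        have hleu : d (x s) ≤ δ_u := le_trans hlt.le hδdu
        have hdd := (hd_chain s hs0 hpos hleu).sub ((hasDerivAt_id s).const_mul (μ/2))
        refine hdd.congr_deriv ?_
        ring
      · intro s hs
        have hs0 : (0:ℝ) ≤ s := le_trans hT₀0 hs.1.le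
        have hgi := hginner s hs0 (hgpos' s hs0) (hcon s hs.1.le).le
        have hm2 := hmu2 s hs.1.le
        linarith
    have hmemL : T₀ ∈ Set.Icc T₀ X := ⟨le_refl _, hX⟩
    have hmemR : X ∈ Set.Icc T₀ X := ⟨hX, le_refl _⟩
    have h : d (x T₀) - μ/2 * T₀ ≤ d (x X) - μ/2 * X := hmono hmemL hmemR hX
    have halg : μ/2 * X - μ/2 * T₀ = δ_d := by
      rw [hXdef]; field_simp; ring
    have h1 := hgpos' T₀ hT₀0
    have h2 := hcon X (le_trans (le_refl _) hX)
    linarith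
  have hT₁0 : 0 ≤ T₁ := le_trans hT₀0 hT₁T₀
  -- barrier: after T₁ the trajectory stays in {d ≥ δ_d}
  have hbar : ∀ t : ℝ, T₁ ≤ t → δ_d ≤ d (x t) := by
    intro t htT₁
    by_contra hlt
    push_neg at hlt
    obtain ⟨A, hAdef⟩ : ∃ S : Set ℝ,
        S = Set.Icc T₁ t ∩ (fun s => d (x s)) ⁻¹' Set.Ici δ_d := ⟨_, rfl⟩
    have hmemA : ∀ s : ℝ, s ∈ A ↔ ((T₁ ≤ s ∧ s ≤ t) ∧ δ_d ≤ d (x s)) := by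
      intro s; rw [hAdef]; simp [Set.mem_Icc, Set.mem_Ici, and_assoc]
    have hAcl : IsClosed A := by
      rw [hAdef]
      exact ((hgcont.mono (fun s hs => le_trans hT₁0 hs.1)).preimage_isClosed_of_isClosed
        isClosed_Icc isClosed_Ici)
    have hAne : A.Nonempty := ⟨T₁, (hmemA T₁).mpr ⟨⟨le_refl _, htT₁⟩, hT₁⟩⟩
    have hAbd : BddAbove A := ⟨t, fun u hu => ((hmemA u).mp hu).1.2⟩
    obtain ⟨r, hrdef⟩ : ∃ y : ℝ, y = sSup A := ⟨_, rfl⟩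
    have hrA : r ∈ A := hrdef ▸ hAcl.csSup_mem hAne hAbd
    have hrT₁ : T₁ ≤ r := ((hmemA r).mp hrA).1.1
    have hr0 : 0 ≤ r := le_trans hT₁0 hrT₁
    have hrle : r ≤ t := ((hmemA r).mp hrA).1.2
    have hrge : δ_d ≤ d (x r) := ((hmemA r).mp hrA).2
    have hafter : ∀ s : ℝ, r < s → s ≤ t → d (x s) < δ_d := by
      intro s h1 h2
      by_contra hge; push_neg at hge
      have hmem : s ∈ A := (hmemA s).mpr ⟨⟨le_trans hrT₁ h1.le, h2⟩, hge⟩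
      have : s ≤ r := hrdef ▸ le_csSup hAbd hmem
      exact absurd this (not_le.mpr h1)
    have hmono : MonotoneOn (fun s => d (x s)) (Set.Icc r t) := by
      apply monoOn_icc (f' := fun s => ⟪gradient d (x s), sproj (x s) (v s)⟫)
        (hgcont.mono (fun s hs => le_trans hr0 hs.1))
      · intro s hs
        have hs0 : (0:ℝ) ≤ s := le_trans hr0 hs.1.le
        have hpos := hgpos' s hs0
        have hlts := hafter s hs.1 hs.2.le
        exact hd_chain s hs0 hpos (le_trans hlts.le hδdu)
      · intro s hs
        have hs0 : (0:ℝ) ≤ s := le_trans hr0 hs.1.le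
        have hlts := hafter s hs.1 hs.2.le
        have hgi := hginner s hs0 (hgpos' s hs0) hlts.le
        have hm2 := hmu2 s (le_trans hT₁T₀ (le_trans hrT₁ hs.1.le))
        linarith
    have h : d (x r) ≤ d (x t) := hmono ⟨le_refl _, hrle⟩ ⟨hrle, le_refl _⟩ hrle
    linarith
  -- bounds for the final estimate
  have hsphne : (Metric.sphere (0 : EuclideanSpace ℝ (Fin (n+1))) 1).Nonempty :=
    NormedSpace.sphere_nonempty.mpr (by norm_num)
  obtain ⟨yM, _, hyM⟩ := (isCompact_sphere (0 : EuclideanSpace ℝ (Fin (n+1))) 1).exists_isMaxOn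
    hsphne hd_cont
  obtain ⟨M, hMdef⟩ : ∃ y : ℝ, y = d yM := ⟨_, rfl⟩
  have hgM : ∀ t : ℝ, 0 ≤ t → d (x t) ≤ M := fun t ht => hMdef ▸ hyM (hxsph t ht)
  obtain ⟨B, hB⟩ := (isCompact_Icc (a := δ_d) (b := M)).exists_bound_of_continuousOn
    (hb_cont.mono (fun s hs => lt_of_lt_of_le hδd hs.1))
  have hBb : ∀ t : ℝ, T₁ ≤ t → b (d (x t)) ≤ B := by
    intro t ht
    have ht0 : 0 ≤ t := le_trans hT₁0 ht
    have := hB _ ⟨hbar t ht, hgM t ht0⟩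
    rw [Real.norm_eq_abs] at this
    exact le_trans (le_abs_self _) this
  have hBnn : 0 ≤ B := by
    have := hB _ ⟨hbar T₁ le_rfl, hgM T₁ hT₁0⟩
    exact le_trans (norm_nonneg _) this
  -- on [0, T₁] use continuity of the derivative
  have hu_eq : ∀ t : ℝ, 0 ≤ t → derivWithin v (Set.Ici 0) t =
      -(k * b (d (x t))) • (v t - ν (x t)) + fderiv ℝ ν (x t) (sproj (x t) (v t)) :=
    fun t ht => ((hv_ode t ht).hasDerivWithinAt).derivWithin (uniqueDiffOn_Ici 0 t ht)
  have hu_cont : ContinuousOn (derivWithin v (Set.Ici 0)) (Set.Ici (0:ℝ)) :=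
    hv_smooth.continuousOn_derivWithin (uniqueDiffOn_Ici 0) le_rfl
  obtain ⟨C₁, hC₁⟩ := (isCompact_Icc (a := (0:ℝ)) (b := T₁)).exists_bound_of_continuousOn
    (hu_cont.mono (fun s hs => hs.1))
  obtain ⟨C₂, hC₂def⟩ : ∃ y : ℝ, y = k * B * E₀ + D₂ * (E₀ + D₁) := ⟨_, rfl⟩
  have hC₂pos : 0 < C₂ := by
    rw [hC₂def]
    have h1 : 0 ≤ k * B * E₀ := by positivity
    have h2 : 0 < D₂ * (E₀ + D₁) := by positivity
    linarith
  refine ⟨max C₁ C₂ + 1, ?_, ?_⟩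
  · have := le_max_right C₁ C₂
    linarith
  · intro t ht
    rcases le_or_gt t T₁ with hcase | hcase
    · rw [← hu_eq t ht]
      have := hC₁ t ⟨ht, hcase⟩
      have h2 := le_max_left C₁ C₂
      linarith
    · have hbT := hbar t hcase.le
      have hx1 : ‖x t‖ = 1 := hx_sphere t ht
      have hpos := hgpos' t ht
      have hbt : b (d (x t)) ≤ B := hBb t hcase.le
      have hb1t : 1 ≤ b (d (x t)) := hb1 t ht
      have hent : ‖v t - ν (x t)‖ ≤ E₀ := hE0all t ht
      have h1 : ‖(-(k * b (d (x t)))) • (v t - ν (x t))‖ ≤ k * B * E₀ := by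
        rw [norm_smul, Real.norm_eq_abs, abs_neg, abs_of_pos (by nlinarith)]
        have hbe2 : b (d (x t)) * ‖v t - ν (x t)‖ ≤ B * E₀ :=
          mul_le_mul hbt hent (norm_nonneg _) hBnn
        nlinarith [mul_le_mul_of_nonneg_left hbe2 hk.le]
      have h2 : ‖fderiv ℝ ν (x t) (sproj (x t) (v t))‖ ≤ D₂ * (E₀ + D₁) := by
        have hop := (fderiv ℝ ν (x t)).le_opNorm (sproj (x t) (v t))
        have hJ := hJ_bdd _ hx1 hbT
        have hsp : ‖sproj (x t) (v t)‖ ≤ E₀ + D₁ := by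
          rw [hsplit t ht hpos]
          calc ‖ν (x t) + sproj (x t) (v t - ν (x t))‖
              ≤ ‖ν (x t)‖ + ‖sproj (x t) (v t - ν (x t))‖ := norm_add_le _ _
            _ ≤ D₁ + ‖v t - ν (x t)‖ := by
                have := sproj_norm_le hx1 (v t - ν (x t))
                have := hν_bdd _ hx1 hpos
                linarith
            _ ≤ E₀ + D₁ := by linarith
        calc ‖fderiv ℝ ν (x t) (sproj (x t) (v t))‖
            ≤ ‖fderiv ℝ ν (x t)‖ * ‖sproj (x t) (v t)‖ := hop
          _ ≤ D₂ * (E₀ + D₁) := by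
              apply mul_le_mul hJ hsp (norm_nonneg _) hD₂.le
      calc ‖-(k * b (d (x t))) • (v t - ν (x t)) + fderiv ℝ ν (x t) (sproj (x t) (v t))‖
          ≤ ‖(-(k * b (d (x t)))) • (v t - ν (x t))‖ +
            ‖fderiv ℝ ν (x t) (sproj (x t) (v t))‖ := norm_add_le _ _
        _ ≤ C₂ := by rw [hC₂def]; linarith
        _ ≤ max C₁ C₂ + 1 := by
            have := le_max_right C₁ C₂
            linarith
end

section
/- Let x, v : [0,∞) → E be continuously differentiable curves satisfying x'(t) = P(x(t)) v(t) and v'(t) = -k·b(d(x(t))) • (v(t) - ν(x(t))) + (Dν(x(t)))(P(x(t)) v(t)) with k > 0. Assume: v is continuous; d is continuous on the unit sphere and differentiable at every unit y with 0 < d(y) ≤ δ_u, with (d∘x)'(t) = ⟪∇d(x(t)), x'(t)⟫ whenever 0 < d(x(t)) ≤ δ_u; ‖P(y) ∇d(y)‖ ≤ D_d for every unit y with 0 < d(y) ≤ δ_u; ⟪∇d(y), ν(y)⟫ ≥ μ for every unit y with 0 < d(y) ≤ δ_d; ⟪y, ν(y)⟫ = 0 and ‖ν(y)‖ ≤ D₁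 for every unit y with d(y) > 0; b(s) = 1/s for s ∈ (0, ε₁] and b(s) > 0 for s > 0, with 0 < ε₁ < δ_u; ν is differentiable at x(t) for every t. If ‖x(0)‖ = 1 and d(x(0)) > 0, then for all t ≥ 0 one has ‖x(t)‖ = 1 and d(x(t)) > 0; that is, the free state space M × E, with M = {y ∈ E : ‖y‖ = 1 and d(y) > 0}, is forward invariant for the closed-loop system. -/
open scoped RealInnerProductSpace

set_option maxHeartbeats 1000000

lemma inner_sproj_symm {F : Type*} [NormedAddCommGroup F] [InnerProductSpace ℝ F]
    (y g u : F) : ⟪g, sproj y u⟫ = ⟪sproj y g, u⟫ := by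
  simp only [sproj, inner_sub_left, inner_sub_right, real_inner_smul_left,
    real_inner_smul_right]
  rw [real_inner_comm g y]
  ring

/-- Claim 1 of Theorem 1: forward invariance of the free state space
`M × E`, with `M = {y : ‖y‖ = 1 ∧ d y > 0}`, for the closed-loop
second-order system on the n-sphere. -/
theorem forward_invariance_claim1
    (n : ℕ)
    (d : EuclideanSpace ℝ (Fin (n+1)) → ℝ)
    (ν : EuclideanSpace ℝ (Fin (n+1)) → EuclideanSpace ℝ (Fin (n+1)))
    (b : ℝ → ℝ)
    (μ D_d D₁ δ_d δ_u ε₁ k : ℝ)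
    (hμ : 0 < μ) (hDd : 0 < D_d) (hD₁ : 0 < D₁)
    (hδd : 0 < δ_d) (hδdu : δ_d ≤ δ_u) (hε₁ : 0 < ε₁) (hε₁u : ε₁ < δ_u)
    (hk : 0 < k)
    (x v : ℝ → EuclideanSpace ℝ (Fin (n+1)))
    -- x and v are continuously differentiable on [0, ∞)
    (hx_smooth : ContDiffOn ℝ 1 x (Set.Ici (0:ℝ)))
    (hv_smooth : ContDiffOn ℝ 1 v (Set.Ici (0:ℝ)))
    -- v is continuous
    (hv_cont : Continuous v)
    -- closed-loop dynamics: x' = P(x) v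
    (hx_ode : ∀ t : ℝ, 0 ≤ t → HasDerivAt x (sproj (x t) (v t)) t)
    -- v' = -k b(d(x)) (v - ν(x)) + Dν(x) (P(x) v)
    (hv_ode : ∀ t : ℝ, 0 ≤ t →
      HasDerivAt v
        (-(k * b (d (x t))) • (v t - ν (x t)) +
          fderiv ℝ ν (x t) (sproj (x t) (v t))) t)
    -- (i) d continuous on the unit sphere, differentiable near the unsafe set,
    -- and chain rule along the curve
    (hd_cont : ContinuousOn d (Metric.sphere (0 : EuclideanSpace ℝ (Fin (n+1))) 1))
    (hd_diff : ∀ y : EuclideanSpace ℝ (Fin (n+1)), ‖y‖ = 1 →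
      0 < d y → d y ≤ δ_u → DifferentiableAt ℝ d y)
    (hd_chain : ∀ t : ℝ, 0 ≤ t → 0 < d (x t) → d (x t) ≤ δ_u →
      HasDerivAt (fun s => d (x s)) ⟪gradient d (x t), sproj (x t) (v t)⟫ t)
    -- (ii) bounded projected gradient near the unsafe set
    (hgrad_bdd : ∀ y : EuclideanSpace ℝ (Fin (n+1)), ‖y‖ = 1 →
      0 < d y → d y ≤ δ_u → ‖sproj y (gradient d y)‖ ≤ D_d)
    -- (iii) the desired vector field points away from the unsafe set
    (hmove : ∀ y : EuclideanSpace ℝ (Fin (n+1)), ‖y‖ = 1 →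
      0 < d y → d y ≤ δ_d → μ ≤ ⟪gradient d y, ν y⟫)
    -- (iv) ν is tangent and bounded on the free space
    (hν_tangent : ∀ y : EuclideanSpace ℝ (Fin (n+1)), ‖y‖ = 1 → 0 < d y → ⟪y, ν y⟫ = 0)
    (hν_bdd : ∀ y : EuclideanSpace ℝ (Fin (n+1)), ‖y‖ = 1 → 0 < d y → ‖ν y‖ ≤ D₁)
    -- (v) damping profile
    (hb_eq : ∀ s : ℝ, 0 < s → s ≤ ε₁ → b s = 1 / s)
    (hb_pos : ∀ s : ℝ, 0 < s → 0 < b s)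
    -- (vi) ν differentiable along the trajectory
    (hν_diff : ∀ t : ℝ, 0 ≤ t → DifferentiableAt ℝ ν (x t))
    -- initial condition in the free space M
    (h0_sphere : ‖x 0‖ = 1)
    (h0 : 0 < d (x 0)) :
    ∀ t : ℝ, 0 ≤ t → ‖x t‖ = 1 ∧ 0 < d (x t) := by
  have hx_cont : ∀ s : ℝ, 0 ≤ s → ContinuousAt x s := fun s hs =>
    (hx_ode s hs).continuousAt
  -- Part 1: the trajectory stays on the unit sphere
  have hsphere : ∀ s : ℝ, 0 ≤ s → ‖x s‖ = 1 := by
    intro t ht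
    set f : ℝ → ℝ := fun s => ⟪x s, x s⟫ - 1 with hf
    have hfd : ∀ s : ℝ, 0 ≤ s →
        HasDerivAt f (-(2 * ⟪x s, v s⟫) * f s) s := by
      intro s hs
      have h1 := ((hx_ode s hs).inner ℝ (hx_ode s hs)).sub_const 1
      refine h1.congr_deriv ?_
      simp only [hf, sproj, inner_sub_right, inner_sub_left, real_inner_smul_right,
        real_inner_smul_left]
      rw [real_inner_comm (x s) (v s)]
      ring
    obtain ⟨C, hC⟩ : ∃ C, ∀ s ∈ Set.Icc (0:ℝ) t, ‖2 * ⟪x s, v s⟫‖ ≤ C := by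
      apply isCompact_Icc.exists_bound_of_continuousOn
      apply ContinuousOn.mul continuousOn_const
      exact fun s hs => ((hx_cont s hs.1).inner
        hv_cont.continuousAt).continuousWithinAt
    have key := norm_le_gronwallBound_of_norm_deriv_right_le
      (f := f) (f' := fun s => -(2 * ⟪x s, v s⟫) * f s) (δ := 0) (K := C) (ε := 0)
      (a := 0) (b := t)
      (fun s hs => ((hfd s hs.1).continuousAt).continuousWithinAt)
      (fun s hs => (hfd s hs.1).hasDerivWithinAt)
      (by
        have hi : (⟪x 0, x 0⟫ : ℝ) = 1 := by
          rw [real_inner_self_eq_norm_mul_norm, h0_sphere]; norm_num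
        simp only [hf, hi, sub_self, norm_zero, le_refl])
      (fun s hs => by
        have h2 := hC s ⟨hs.1, hs.2.le⟩
        rw [norm_mul, norm_neg]
        have h3 : ‖(2 * ⟪x s, v s⟫)‖ * ‖f s‖ ≤ C * ‖f s‖ :=
          mul_le_mul_of_nonneg_right h2 (norm_nonneg _)
        linarith)
    have h4 := key t ⟨ht, le_refl t⟩
    rw [gronwallBound_ε0_δ0] at h4
    have hf0 : f t = 0 := norm_le_zero_iff.mp h4
    have h5 : ‖x t‖ * ‖x t‖ = 1 := by
      rw [hf] at hf0
      simp only at hf0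
      rw [real_inner_self_eq_norm_mul_norm] at hf0
      linarith
    nlinarith [norm_nonneg (x t)]
  intro t ht
  refine ⟨hsphere t ht, ?_⟩
  by_contra hcon
  have hφt : d (x t) ≤ 0 := not_lt.mp hcon
  -- continuity of d ∘ x on [0, ∞)
  have hφcont : ContinuousOn (fun s => d (x s)) (Set.Ici (0:ℝ)) := by
    apply hd_cont.comp (fun s hs => (hx_cont s hs).continuousWithinAt)
    intro s hs
    exact mem_sphere_zero_iff_norm.mpr (hsphere s hs)
  -- the relative velocity w and its squared norm q
  set w : ℝ → EuclideanSpace ℝ (Fin (n+1)) := fun s => v s - ν (x s) with hwdef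
  have hw : ∀ s : ℝ, 0 ≤ s →
      HasDerivAt w (-(k * b (d (x s))) • w s) s := by
    intro s hs
    have h2 : HasDerivAt (fun u => ν (x u)) (fderiv ℝ ν (x s) (sproj (x s) (v s))) s :=
      (hν_diff s hs).hasFDerivAt.comp_hasDerivAt s (hx_ode s hs)
    have h3 := (hv_ode s hs).sub h2
    exact h3.congr_deriv (by simp [hwdef])
  set q : ℝ → ℝ := fun s => ⟪w s, w s⟫ with hqdef
  have hq : ∀ s : ℝ, 0 ≤ s →
      HasDerivAt q (-(2 * k * b (d (x s))) * q s) s := by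
    intro s hs
    have h1 := (hw s hs).inner ℝ (hw s hs)
    refine h1.congr_deriv ?_
    simp only [hqdef, real_inner_smul_left, real_inner_smul_right]
    ring
  have hq_nonneg : ∀ s : ℝ, 0 ≤ q s := fun s => real_inner_self_nonneg
  -- the first hitting time τ of the unsafe boundary
  set S : Set ℝ := {s : ℝ | s ∈ Set.Icc (0:ℝ) t ∧ d (x s) ≤ 0} with hSdef
  have hSne : S.Nonempty := ⟨t, ⟨ht, le_refl t⟩, hφt⟩
  have hSbdd : BddBelow S := ⟨0, fun s hs => hs.1.1⟩
  have hSclosed : IsClosed S := by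
    have : S = Set.Icc 0 t ∩ (fun s => d (x s)) ⁻¹' Set.Iic 0 := by
      ext s; simp [hSdef, Set.mem_Icc, and_assoc]
    rw [this]
    exact (hφcont.mono (Set.Icc_subset_Ici_self)).preimage_isClosed_of_isClosed
      isClosed_Icc isClosed_Iic
  set τ : ℝ := sInf S with hτdef
  have hτS : τ ∈ S := hSclosed.csInf_mem hSne hSbdd
  have hτ0 : 0 ≤ τ := hτS.1.1
  have hτt : τ ≤ t := hτS.1.2
  have hτpos : 0 < τ := by
    rcases lt_or_eq_of_le hτ0 with h | h
    · exact h
    · exfalso; rw [← h] at hτS; linarith [hτS.2]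
  have hbefore : ∀ s : ℝ, 0 ≤ s → s < τ → 0 < d (x s) := by
    intro s h1 h2
    by_contra h
    push_neg at h
    have hmem : s ∈ S := ⟨⟨h1, le_trans h2.le hτt⟩, h⟩
    exact absurd (csInf_le hSbdd hmem) (not_le.mpr h2)
  have hcτ : ContinuousAt (fun s => d (x s)) τ :=
    hφcont.continuousAt (Ici_mem_nhds hτpos)
  have hφτ0 : d (x τ) = 0 := by
    have h1 : 0 ≤ d (x τ) := by
      have htd : Filter.Tendsto (fun s => d (x s)) (nhdsWithin τ (Set.Iio τ)) (nhds (d (x τ))) :=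
        hcτ.tendsto.mono_left nhdsWithin_le_nhds
      refine ge_of_tendsto htd ?_
      filter_upwards [Ioo_mem_nhdsLT_of_mem (Set.mem_Ioc.mpr ⟨hτpos, le_refl τ⟩)] with s hs
      exact (hbefore s hs.1.le hs.2).le
    linarith [hτS.2]
  -- near τ, d ∘ x is small
  set ε : ℝ := min ε₁ δ_d with hεdef
  have hεpos : 0 < ε := lt_min hε₁ hδd
  obtain ⟨δτ, hδτpos, hδτ⟩ := Metric.continuousAt_iff.mp hcτ ε hεpos
  set σ : ℝ := max (τ - δτ/2) (τ/2) with hσdef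
  have hσ0 : 0 ≤ σ := le_trans (by linarith) (le_max_right _ _)
  have hστ : σ < τ := max_lt (by linarith) (by linarith)
  have hmid : ∀ s : ℝ, σ < s → s < τ → 0 < d (x s) ∧ d (x s) < ε := by
    intro s hs1 hs2
    have hspos : 0 < s := lt_of_le_of_lt (by linarith : (0:ℝ) ≤ τ/2)
      (lt_of_le_of_lt (le_max_right _ _) hs1)
    refine ⟨hbefore s hspos.le hs2, ?_⟩
    have hdist : dist s τ < δτ := by
      rw [Real.dist_eq, abs_lt]
      constructor
      · have := lt_of_le_of_lt (le_max_left _ _) hs1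
        linarith
      · linarith
    have := hδτ hdist
    rw [Real.dist_eq, hφτ0, sub_zero] at this
    exact lt_of_le_of_lt (le_abs_self _) this
  set t₀ : ℝ := (σ + τ)/2 with ht₀def
  have ht₀1 : σ < t₀ := by rw [ht₀def]; linarith
  have ht₀2 : t₀ < τ := by rw [ht₀def]; linarith
  have ht₀pos : 0 < t₀ := lt_of_le_of_lt hσ0 ht₀1
  -- velocity bound and Lipschitz constant for d ∘ x
  obtain ⟨V, hV⟩ : ∃ V, ∀ s ∈ Set.Icc (0:ℝ) τ, ‖v s‖ ≤ V :=
    isCompact_Icc.exists_bound_of_continuousOn hv_cont.continuousOn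
  have hV0 : 0 ≤ V := le_trans (norm_nonneg (v 0)) (hV 0 ⟨le_refl 0, hτ0⟩)
  set L : ℝ := D_d * V + 1 with hLdef
  have hL : 0 < L := by positivity
  -- facts available at interior times
  have hfacts : ∀ s : ℝ, σ < s → s < τ →
      0 < s ∧ 0 < d (x s) ∧ d (x s) < ε ∧ d (x s) ≤ ε₁ ∧ d (x s) ≤ δ_d ∧ d (x s) ≤ δ_u := by
    intro s hs1 hs2
    have hspos : 0 < s := lt_of_le_of_lt (by linarith : (0:ℝ) ≤ τ/2)
      (lt_of_le_of_lt (le_max_right _ _) hs1)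
    obtain ⟨hp, hlt⟩ := hmid s hs1 hs2
    exact ⟨hspos, hp, hlt, le_trans hlt.le (min_le_left _ _),
      le_trans hlt.le (min_le_right _ _),
      le_trans (le_trans hlt.le (min_le_left _ _)) hε₁u.le⟩
  -- bound |φ'| ≤ D_d * V on (σ, τ)
  have hφ'bound : ∀ s : ℝ, σ < s → s < τ →
      |⟪gradient d (x s), sproj (x s) (v s)⟫| ≤ D_d * V := by
    intro s hs1 hs2
    obtain ⟨hspos, hp, _, _, _, hu⟩ := hfacts s hs1 hs2
    rw [inner_sproj_symm]
    refine le_trans (abs_real_inner_le_norm _ _) ?_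
    exact mul_le_mul (hgrad_bdd (x s) (hsphere s hspos.le) hp hu)
      (hV s ⟨hspos.le, hs2.le⟩) (norm_nonneg _) hDd.le
  -- d(x s) ≤ L (τ - s) on [t₀, τ]
  have hφle : ∀ s ∈ Set.Icc t₀ τ, d (x s) ≤ L * (τ - s) := by
    have hmono : MonotoneOn (fun s => d (x s) + L * s) (Set.Icc t₀ τ) := by
      apply monotoneOn_of_deriv_nonneg (convex_Icc t₀ τ)
      · apply ContinuousOn.add
        · exact hφcont.mono (fun s hs => le_trans ht₀pos.le hs.1)
        · exact (continuous_const.mul continuous_id).continuousOn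
      · intro s hs
        rw [interior_Icc] at hs
        obtain ⟨hspos, hp, _, _, _, hu⟩ := hfacts s (lt_trans ht₀1 hs.1) hs.2
        exact ((hd_chain s hspos.le hp hu).add
          (by simpa using (hasDerivAt_id s).const_mul L)).differentiableAt.differentiableWithinAt
      · intro s hs
        rw [interior_Icc] at hs
        obtain ⟨hspos, hp, _, _, _, hu⟩ := hfacts s (lt_trans ht₀1 hs.1) hs.2
        have hder : HasDerivAt (fun u => d (x u) + L * u)
            (⟪gradient d (x s), sproj (x s) (v s)⟫ + L) s :=
          (hd_chain s hspos.le hp hu).add (by simpa using (hasDerivAt_id s).const_mul L)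
        rw [hder.deriv]
        have := hφ'bound s (lt_trans ht₀1 hs.1) hs.2
        rw [abs_le] at this
        rw [hLdef]
        linarith only [this.1]
    intro s hs
    have h1 := hmono hs (Set.mem_Icc.mpr ⟨le_trans hs.1 hs.2, le_refl τ⟩) hs.2
    have h2 : d (x s) + L * s ≤ d (x τ) + L * τ := h1
    rw [hφτ0] at h2
    linarith
  -- the decay estimate for q
  set α : ℝ := 2 * k / L with hαdef
  have hα : 0 < α := by positivity
  set G : ℝ → ℝ := fun s => q s * (τ - s) ^ (-α) with hGdef
  have hGd : ∀ s : ℝ, σ < s → s < τ →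
      HasDerivAt G ((-(2 * k * b (d (x s))) * q s) * (τ - s) ^ (-α)
        + q s * (α * (τ - s) ^ (-α - 1))) s := by
    intro s hs1 hs2
    obtain ⟨hspos, hp, _, _, _, _⟩ := hfacts s hs1 hs2
    have hbase : HasDerivAt (fun u => τ - u) (-1) s := (hasDerivAt_id s).const_sub τ
    have hτs : (0:ℝ) < τ - s := by linarith
    have h2 : HasDerivAt (fun u => (τ - u) ^ (-α)) (α * (τ - s) ^ (-α - 1)) s := by
      have h3 := (Real.hasDerivAt_rpow_const (x := τ - s) (p := -α)
        (Or.inl hτs.ne')).comp s hbase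
      refine h3.congr_deriv ?_
      ring
    exact (hq s hspos.le).mul h2
  have hGanti : AntitoneOn G (Set.Ico t₀ τ) := by
    apply antitoneOn_of_deriv_nonpos (convex_Ico t₀ τ)
    · intro s hs
      exact (hGd s (lt_of_lt_of_le ht₀1 hs.1) hs.2).continuousAt.continuousWithinAt
    · intro s hs
      rw [interior_Ico] at hs
      exact (hGd s (lt_trans ht₀1 hs.1) hs.2).differentiableAt.differentiableWithinAt
    · intro s hs
      rw [interior_Ico] at hs
      have hσs : σ < s := lt_trans ht₀1 hs.1
      obtain ⟨hspos, hp, _, hε₁', _, _⟩ := hfacts s hσs hs.2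
      rw [(hGd s hσs hs.2).deriv]
      have hτs : (0:ℝ) < τ - s := by linarith [hs.2]
      have hbeq : b (d (x s)) = 1 / d (x s) := hb_eq _ hp hε₁'
      have hrw : (τ - s) ^ (-α) = (τ - s) ^ (-α - 1) * (τ - s) := by
        rw [← Real.rpow_add_one hτs.ne' (-α - 1)]
        ring_nf
      rw [hbeq, hrw]
      have hB : (0:ℝ) < (τ - s) ^ (-α - 1) := Real.rpow_pos_of_pos hτs _
      have hle : d (x s) ≤ L * (τ - s) := hφle s ⟨hs.1.le, hs.2.le⟩
      -- key inequality : α * d(x s) ≤ 2k (τ - s)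
      have hkey : α * d (x s) ≤ 2 * k * (τ - s) := by
        rw [hαdef, div_mul_eq_mul_div, div_le_iff₀ hL]
        have h8 := mul_le_mul_of_nonneg_left hle (by positivity : (0:ℝ) ≤ 2*k)
        linarith only [h8]
      have hq0 := hq_nonneg s
      have h9 : α ≤ 2 * k * (τ - s) / d (x s) := (le_div_iff₀ hp).mpr hkey
      have hc : 0 ≤ q s * (τ - s) ^ (-α - 1) := mul_nonneg hq0 hB.le
      have h10 := mul_le_mul_of_nonneg_left h9 hc
      have hdne : d (x s) ≠ 0 := ne_of_gt hp
      rw [div_eq_mul_inv] at h10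
      have hexp : -(2 * k * (1 / d (x s))) * q s * ((τ - s) ^ (-α - 1) * (τ - s))
          + q s * (α * (τ - s) ^ (-α - 1))
          = q s * (τ - s) ^ (-α - 1) * α
            - q s * (τ - s) ^ (-α - 1) * (2 * k * (τ - s) * (d (x s))⁻¹) := by
        field_simp
        ring
      rw [hexp]
      linarith only [h10]
  -- pick t₁ close to τ where q is small
  set C : ℝ := q t₀ * (τ - t₀) ^ (-α) with hCdef
  have hC0 : 0 ≤ C := mul_nonneg (hq_nonneg t₀) (Real.rpow_pos_of_pos (by linarith) _).le
  have hqle : ∀ s, t₀ ≤ s → s < τ → q s ≤ C * (τ - s) ^ α := by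
    intro s hs1 hs2
    have h1 : G s ≤ G t₀ := hGanti (Set.mem_Ico.mpr ⟨le_refl t₀, ht₀2⟩)
      (Set.mem_Ico.mpr ⟨hs1, hs2⟩) hs1
    have hτs : (0:ℝ) < τ - s := by linarith
    have hpos : (0:ℝ) < (τ - s) ^ α := Real.rpow_pos_of_pos hτs _
    have h2 : (q s * (τ - s) ^ (-α)) * (τ - s) ^ α ≤ C * (τ - s) ^ α :=
      mul_le_mul_of_nonneg_right h1 hpos.le
    rw [mul_assoc, ← Real.rpow_add hτs, neg_add_cancel, Real.rpow_zero, mul_one] at h2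
    exact h2
  set m : ℝ := (μ / (2 * D_d)) ^ 2 with hmdef
  have hm : 0 < m := by positivity
  set η : ℝ := min ((τ - t₀)/2) ((m / (C + 1)) ^ (α⁻¹)) with hηdef
  have hη : 0 < η := lt_min (by linarith) (Real.rpow_pos_of_pos (by positivity) _)
  set t₁ : ℝ := τ - η with ht₁def
  have hη2 : η ≤ (τ - t₀)/2 := by rw [hηdef]; exact min_le_left _ _
  have hη3 : η ≤ (m / (C + 1)) ^ (α⁻¹) := by rw [hηdef]; exact min_le_right _ _
  have ht₁a : t₀ < t₁ := by rw [ht₁def]; linarith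
  have ht₁b : t₁ < τ := by rw [ht₁def]; linarith
  have ht₁pos : 0 < t₁ := lt_trans ht₀pos ht₁a
  have hqt₁ : q t₁ < m := by
    have h1 : q t₁ ≤ C * η ^ α := by
      have h1' := hqle t₁ ht₁a.le ht₁b
      have he : τ - t₁ = η := by rw [ht₁def]; ring
      rwa [he] at h1'
    have h2 : η ^ α ≤ m / (C + 1) := by
      have h4 := Real.rpow_le_rpow hη.le hη3 hα.le
      rwa [Real.rpow_inv_rpow (by positivity) hα.ne'] at h4
    have h5 : C * η ^ α ≤ C * (m / (C + 1)) := mul_le_mul_of_nonneg_left h2 hC0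
    have h6 : C * (m / (C + 1)) < m := by
      rw [mul_div_assoc', div_lt_iff₀ (by linarith only [hC0] : (0:ℝ) < C + 1)]
      linarith only [hm]
    linarith
  -- q is nonincreasing on [t₁, τ)
  have hqanti : AntitoneOn q (Set.Ico t₁ τ) := by
    apply antitoneOn_of_deriv_nonpos (convex_Ico t₁ τ)
    · intro s hs
      exact (hq s (le_trans ht₁pos.le hs.1)).continuousAt.continuousWithinAt
    · intro s hs
      rw [interior_Ico] at hs
      exact (hq s (le_of_lt (lt_trans ht₁pos hs.1))).differentiableAt.differentiableWithinAt
    · intro s hs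
      rw [interior_Ico] at hs
      have hspos : 0 < s := lt_trans ht₁pos hs.1
      rw [(hq s hspos.le).deriv]
      obtain ⟨_, hp, _, _, _, _⟩ := hfacts s (lt_trans ht₀1 (lt_trans ht₁a hs.1)) hs.2
      have hbp := hb_pos _ hp
      have := hq_nonneg s
      apply mul_nonpos_of_nonpos_of_nonneg _ this
      linarith only [mul_pos hk hbp]
  have hwsmall : ∀ s, t₁ ≤ s → s < τ → ‖w s‖ < μ / (2 * D_d) := by
    intro s hs1 hs2
    have h1 : q s ≤ q t₁ := hqanti (Set.mem_Ico.mpr ⟨le_refl t₁, ht₁b⟩)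
      (Set.mem_Ico.mpr ⟨hs1, hs2⟩) hs1
    have h2 : ‖w s‖ ^ 2 < (μ / (2 * D_d)) ^ 2 := by
      have h3 : q s = ‖w s‖ ^ 2 := real_inner_self_eq_norm_sq (w s)
      rw [hmdef] at hqt₁
      linarith
    exact lt_of_pow_lt_pow_left₀ 2 (by positivity) h2
  -- d ∘ x is strictly increasing on [t₁, τ], contradiction with d(x τ) = 0
  have hmono : StrictMonoOn (fun s => d (x s)) (Set.Icc t₁ τ) := by
    apply strictMonoOn_of_deriv_pos (convex_Icc t₁ τ)
    · exact hφcont.mono (fun s hs => le_trans ht₁pos.le hs.1)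
    · intro s hs
      rw [interior_Icc] at hs
      have hσs : σ < s := lt_trans ht₀1 (lt_trans ht₁a hs.1)
      obtain ⟨hspos, hp, _, _, hd', hu⟩ := hfacts s hσs hs.2
      rw [(hd_chain s hspos.le hp hu).deriv]
      have hsph := hsphere s hspos.le
      -- split the derivative
      have hsplit : ⟪gradient d (x s), sproj (x s) (v s)⟫
          = ⟪sproj (x s) (gradient d (x s)), w s⟫ + ⟪gradient d (x s), ν (x s)⟫ := by
        rw [inner_sproj_symm]
        have hv' : v s = w s + ν (x s) := by rw [hwdef]; simp
        rw [hv', inner_add_right]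
        congr 1
        rw [← inner_sproj_symm]
        have : sproj (x s) (ν (x s)) = ν (x s) := by
          rw [sproj, hν_tangent (x s) hsph hp]
          simp
        rw [this]
      rw [hsplit]
      have h1 := abs_real_inner_le_norm (sproj (x s) (gradient d (x s))) (w s)
      have h2 := hgrad_bdd (x s) hsph hp hu
      have h3 := hwsmall s hs.1.le hs.2
      have h4 := hmove (x s) hsph hp hd'
      have h5 : ‖sproj (x s) (gradient d (x s))‖ * ‖w s‖ ≤ D_d * ‖w s‖ :=
        mul_le_mul_of_nonneg_right h2 (norm_nonneg _)
      have h6 : D_d * ‖w s‖ < D_d * (μ / (2 * D_d)) :=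
        mul_lt_mul_of_pos_left h3 hDd
      have h7 : D_d * (μ / (2 * D_d)) = μ / 2 := by field_simp
      have h8 := neg_abs_le ⟪sproj (x s) (gradient d (x s)), w s⟫
      linarith only [h1, h4, h5, h6, h7, h8, hμ]
  have hlt := hmono (Set.mem_Icc.mpr ⟨le_refl t₁, ht₁b.le⟩)
    (Set.mem_Icc.mpr ⟨ht₁b.le, le_refl τ⟩) ht₁b
  have hlt2 : d (x t₁) < d (x τ) := hlt
  rw [hφτ0] at hlt2
  exact absurd hlt2 (not_lt.mpr (hbefore t₁ ht₁pos.le ht₁b).le)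
end

section
/- Let ν : E → E be differentiable, let b : ℝ → ℝ be any function of time, let k ∈ ℝ, and let x, v : ℝ → E be curves such that at every t, x has derivative x'(t) = P(x(t)) v(t) and v has derivative v'(t) = -(k · b(t)) • (v(t) - ν(x(t))) + (Dν(x(t)))(P(x(t)) v(t)), where Dν(x(t)) is the Fréchet derivative of ν at x(t). Then the error curve z(t) := v(t) - ν(x(t)) is differentiable at every t with derivative z'(t) = -(k · b(t)) • z(t). In particular, the function V(t) = ½‖z(t)‖² satisfies V'(t) = -k·b(t)·‖z(t)‖². -/
open scoped RealInnerProductSpace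

/-- The error-dynamics identity behind the dynamic-damping control law:
along the closed loop, the error `z = v - ν(x)` satisfies `z' = -(k b(t)) z`,
and `V = ½‖z‖²` satisfies `V' = -k b(t) ‖z‖²`. -/
theorem error_dynamics
    (n : ℕ)
    (ν : EuclideanSpace ℝ (Fin (n+1)) → EuclideanSpace ℝ (Fin (n+1)))
    (hν : Differentiable ℝ ν)
    (b : ℝ → ℝ) (k : ℝ)
    (x v : ℝ → EuclideanSpace ℝ (Fin (n+1)))
    (hx : ∀ t : ℝ, HasDerivAt x (sproj (x t) (v t)) t)
    (hv : ∀ t : ℝ, HasDerivAt v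
      (-(k * b t) • (v t - ν (x t)) + fderiv ℝ ν (x t) (sproj (x t) (v t))) t) :
    (∀ t : ℝ, HasDerivAt (fun s => v s - ν (x s))
      (-(k * b t) • (v t - ν (x t))) t) ∧
    (∀ t : ℝ, HasDerivAt (fun s => (1/2 : ℝ) * ‖v s - ν (x s)‖^2)
      (-(k * b t) * ‖v t - ν (x t)‖^2) t) := by
  have hz : ∀ t : ℝ, HasDerivAt (fun s => v s - ν (x s))
      (-(k * b t) • (v t - ν (x t))) t := by
    intro t
    have hc : HasDerivAt (fun s => ν (x s)) (fderiv ℝ ν (x t) (sproj (x t) (v t))) t :=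
      (hν (x t)).hasFDerivAt.comp_hasDerivAt t (hx t)
    have := (hv t).sub hc
    rw [add_sub_cancel_right] at this
    exact this
  refine ⟨hz, fun t => ?_⟩
  have h1 : HasDerivAt (fun s => ⟪v s - ν (x s), v s - ν (x s)⟫)
      (⟪v t - ν (x t), -(k * b t) • (v t - ν (x t))⟫ +
        ⟪-(k * b t) • (v t - ν (x t)), v t - ν (x t)⟫) t :=
    (hz t).inner ℝ (hz t)
  have h2 := h1.const_mul (1/2 : ℝ)
  have heq : ∀ s : ℝ, (1/2 : ℝ) * ⟪v s - ν (x s), v s - ν (x s)⟫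
      = (1/2 : ℝ) * ‖v s - ν (x s)‖^2 := by
    intro s; rw [real_inner_self_eq_norm_sq]
  have h3 : (1/2 : ℝ) * (⟪v t - ν (x t), -(k * b t) • (v t - ν (x t))⟫ +
      ⟪-(k * b t) • (v t - ν (x t)), v t - ν (x t)⟫)
      = -(k * b t) * ‖v t - ν (x t)‖^2 := by
    rw [real_inner_smul_left, real_inner_smul_right, real_inner_self_eq_norm_sq]
    ring
  rw [funext heq, h3] at h2
  exact h2
end

section
/- Let a, b ∈ E with ‖a‖ = ‖b‖ = 1, b ≠ a and b ≠ -a, set θ := arccos ⟪a, b⟫ ∈ (0, π), and define g : ℝ → E by g(λ) = (sin((1-λ)θ)/sin θ) • a + (sin(λθ)/sin θ) • b. Then g is twice differentiable on ℝ with second derivative g''(λ) = -θ² • g(λ) for every λ; consequently P(g(λ)) g''(λ) = 0 for every λ, i.e. the acceleration of g has no component tangent to the sphere, so g satisfies the geodesic equation on S^n. -/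
open scoped RealInnerProductSpace

/-- Section II of the paper: the slerp curve `g` satisfies the geodesic
equation on the sphere: it is twice differentiable with `g'' = -θ² g`, so
`P(g(λ)) g''(λ) = 0` for all `λ`. -/
theorem slerp_is_geodesic
    (n : ℕ)
    (a b : EuclideanSpace ℝ (Fin (n+1)))
    (ha : ‖a‖ = 1) (hb : ‖b‖ = 1)
    (hne : b ≠ a) (hne' : b ≠ -a)
    (θ : ℝ) (hθ : θ = Real.arccos ⟪a, b⟫)
    (g : ℝ → EuclideanSpace ℝ (Fin (n+1)))
    (hg : g = fun l =>
      (Real.sin ((1 - l) * θ) / Real.sin θ) • a +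
        (Real.sin (l * θ) / Real.sin θ) • b) :
    ∃ g' : ℝ → EuclideanSpace ℝ (Fin (n+1)),
      (∀ l : ℝ, HasDerivAt g (g' l) l) ∧
      (∀ l : ℝ, HasDerivAt g' (-(θ^2) • g l) l) ∧
      (∀ l : ℝ, sproj (g l) (-(θ^2) • g l) = 0) := by
  have habs : |⟪a, b⟫| ≤ 1 := by
    have := abs_real_inner_le_norm a b
    simpa [ha, hb] using this
  have hlt1 : ⟪a, b⟫ < 1 := by
    rcases lt_or_eq_of_le (abs_le.mp habs).2 with h | h
    · exact h
    · exact absurd ((inner_eq_one_iff_of_norm_eq_one ha hb).mp h).symm hne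
  have hgt1 : -1 < ⟪a, b⟫ := by
    rcases lt_or_eq_of_le (abs_le.mp habs).1 with h | h
    · exact h
    · exfalso
      have hnb : ‖-b‖ = 1 := by simpa using hb
      have : ⟪a, -b⟫ = 1 := by
        rw [inner_neg_right, ← h]; ring
      have := (inner_eq_one_iff_of_norm_eq_one ha hnb).mp this
      exact hne' (by rw [this]; simp)
  have hθ0 : 0 < θ := hθ ▸ Real.arccos_pos.mpr hlt1
  have hθπ : θ < Real.pi := by
    rw [hθ]
    rcases lt_or_eq_of_le (Real.arccos_le_pi ⟪a, b⟫) with h | h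
    · exact h
    · exact absurd (Real.arccos_eq_pi.mp h) (by linarith)
  have hS : 0 < Real.sin θ := Real.sin_pos_of_pos_of_lt_pi hθ0 hθπ
  have hSne : Real.sin θ ≠ 0 := ne_of_gt hS
  have hcos : Real.cos θ = ⟪a, b⟫ := by
    rw [hθ]; exact Real.cos_arccos (abs_le.mp habs).1 (abs_le.mp habs).2
  -- derivatives of the scalar coefficients
  have hA : ∀ l : ℝ, HasDerivAt (fun l : ℝ => Real.sin ((1 - l) * θ))
      (-θ * Real.cos ((1 - l) * θ)) l := by
    intro l
    have h1 : HasDerivAt (fun l : ℝ => (1 - l) * θ) (-θ) l := by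
      have := ((hasDerivAt_id l).const_sub 1).mul_const θ
      simpa using this
    have := (Real.hasDerivAt_sin ((1 - l) * θ)).comp l h1
    simpa [mul_comm, Function.comp_def] using this
  have hB : ∀ l : ℝ, HasDerivAt (fun l : ℝ => Real.sin (l * θ))
      (θ * Real.cos (l * θ)) l := by
    intro l
    have h1 : HasDerivAt (fun l : ℝ => l * θ) θ l := by
      simpa using (hasDerivAt_id l).mul_const θ
    have := (Real.hasDerivAt_sin (l * θ)).comp l h1
    simpa [mul_comm, Function.comp_def] using this
  have hA' : ∀ l : ℝ, HasDerivAt (fun l : ℝ => -θ * Real.cos ((1 - l) * θ))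
      (-(θ^2) * Real.sin ((1 - l) * θ)) l := by
    intro l
    have h1 : HasDerivAt (fun l : ℝ => (1 - l) * θ) (-θ) l := by
      have := ((hasDerivAt_id l).const_sub 1).mul_const θ
      simpa using this
    have := ((Real.hasDerivAt_cos ((1 - l) * θ)).comp l h1).const_mul (-θ)
    exact this.congr_deriv (by ring)
  have hB' : ∀ l : ℝ, HasDerivAt (fun l : ℝ => θ * Real.cos (l * θ))
      (-(θ^2) * Real.sin (l * θ)) l := by
    intro l
    have h1 : HasDerivAt (fun l : ℝ => l * θ) θ l := by
      simpa using (hasDerivAt_id l).mul_const θ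
    have := ((Real.hasDerivAt_cos (l * θ)).comp l h1).const_mul θ
    exact this.congr_deriv (by ring)
  refine ⟨fun l =>
      (-θ * Real.cos ((1 - l) * θ) / Real.sin θ) • a +
        (θ * Real.cos (l * θ) / Real.sin θ) • b, ?_, ?_, ?_⟩
  · intro l
    rw [hg]
    exact (((hA l).div_const _).smul_const a).add (((hB l).div_const _).smul_const b)
  · intro l
    have := ((((hA' l).div_const (Real.sin θ)).smul_const a).add
      (((hB' l).div_const (Real.sin θ)).smul_const b))
    refine this.congr_deriv ?_
    rw [hg]
    simp only [smul_add, smul_smul]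
    congr 1 <;> congr 1 <;> ring
  · intro l
    have hnorm : ⟪g l, g l⟫ = 1 := by
      rw [hg]
      simp only [real_inner_add_add_self, real_inner_smul_left, real_inner_smul_right]
      rw [real_inner_self_eq_norm_sq, real_inner_self_eq_norm_sq, ha, hb, ← hcos]
      have h1 : Real.sin ((1 - l) * θ) =
          Real.sin θ * Real.cos (l * θ) - Real.cos θ * Real.sin (l * θ) := by
        have : (1 - l) * θ = θ - l * θ := by ring
        rw [this, Real.sin_sub]
      rw [h1]
      have hst : Real.sin (l * θ) ^ 2 + Real.cos (l * θ) ^ 2 = 1 := Real.sin_sq_add_cos_sq _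
      have hst2 : Real.sin θ ^ 2 + Real.cos θ ^ 2 = 1 := Real.sin_sq_add_cos_sq _
      field_simp
      nlinarith [hst, hst2]
    rw [sproj, real_inner_smul_right, hnorm]
    simp
end

section
/- Let E be a real inner product space of dimension n+1, let x ∈ E with ‖x‖ = 1, let P : E → E be P v = v - ⟪x,v⟫·x, let J : E → E be linear, and let c > 0. Define the linear operator L : E × E → E × E by L(n₁, n₂) = (P n₂, c • (J n₁) + J (P n₂) - c • n₂). Then for every n₂ ∈ E, the vector (-(1/c) • P n₂, n₂) satisfies L(-(1/c) • P n₂, n₂) = (-c) • (-(1/c) • P n₂, n₂); moreover the map n₂ ↦ (-(1/c) • P n₂, n₂) is an injective linear map from E into the eigenspace of L for the eigenvalue -c, so that eigenspace has dimension at least n+1. -/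
open scoped RealInnerProductSpace

/-- From the proof of Theorem 1 of the paper: for the linearization
`L(n₁, n₂) = (P n₂, c J n₁ + J (P n₂) - c n₂)` of the closed loop at an
equilibrium, every vector `(-(1/c) P n₂, n₂)` is an eigenvector for the
eigenvalue `-c`; the map `n₂ ↦ (-(1/c) P n₂, n₂)` is injective and linear
into that eigenspace, so the eigenspace of `-c` has dimension at least
`n + 1`. -/
theorem damping_eigenvalue_multiplicity
    (n : ℕ)
    (E : Type*) [NormedAddCommGroup E] [InnerProductSpace ℝ E]
    [FiniteDimensional ℝ E]
    (hdim : Module.finrank ℝ E = n + 1)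
    (x : E) (hx : ‖x‖ = 1)
    (J : E →ₗ[ℝ] E) (c : ℝ) (hc : 0 < c)
    (L : Module.End ℝ (E × E))
    (hL : ∀ p : E × E,
      L p = (sproj x p.2, c • J p.1 + J (sproj x p.2) - c • p.2)) :
    (∀ n₂ : E,
      L ((-(1/c)) • sproj x n₂, n₂) = (-c) • ((-(1/c)) • sproj x n₂, n₂)) ∧
    (∀ n₂ : E,
      ((-(1/c)) • sproj x n₂, n₂) ∈ Module.End.eigenspace L (-c)) ∧
    Function.Injective (fun n₂ : E => ((-(1/c)) • sproj x n₂, n₂)) ∧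
    n + 1 ≤ Module.finrank ℝ (Module.End.eigenspace L (-c)) := by

  have hc0 : c ≠ 0 := ne_of_gt hc
  have key : ∀ n₂ : E,
      L ((-(1/c)) • sproj x n₂, n₂) = (-c) • ((-(1/c)) • sproj x n₂, n₂) := by
    intro n₂
    rw [hL]
    have h1 : c • J ((-(1/c)) • sproj x n₂) = -(J (sproj x n₂)) := by
      rw [map_smul, smul_smul]
      field_simp
      exact neg_one_smul ℝ _
    ext
    · simp [smul_smul, hc0]
    · simp only [Prod.smul_snd, h1]
      module
  have mem : ∀ n₂ : E,
      ((-(1/c)) • sproj x n₂, n₂) ∈ Module.End.eigenspace L (-c) := by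
    intro n₂
    rw [Module.End.mem_eigenspace_iff]
    exact key n₂
  have inj : Function.Injective (fun n₂ : E => ((-(1/c)) • sproj x n₂, n₂)) := by
    intro a b h
    exact congrArg Prod.snd h
  refine ⟨key, mem, inj, ?_⟩
  -- build a linear map into the eigenspace
  let Pl : E →ₗ[ℝ] E :=
    LinearMap.id - ((innerSL ℝ x : E →L[ℝ] ℝ) : E →ₗ[ℝ] ℝ).smulRight x
  have hPl : ∀ v, Pl v = sproj x v := by
    intro v; simp [Pl, sproj]
  let f : E →ₗ[ℝ] E × E := LinearMap.prod ((-(1/c)) • Pl) LinearMap.id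
  have hf : ∀ v, f v = ((-(1/c)) • sproj x v, v) := by
    intro v; simp [f, hPl]
  let g : E →ₗ[ℝ] (Module.End.eigenspace L (-c)) :=
    f.codRestrict (Module.End.eigenspace L (-c)) (fun v => by rw [hf]; exact mem v)
  have hg : Function.Injective g := by
    intro a b h
    have : f a = f b := congrArg Subtype.val h
    rw [hf, hf] at this
    exact congrArg Prod.snd this
  calc n + 1 = Module.finrank ℝ E := hdim.symm
    _ ≤ Module.finrank ℝ (Module.End.eigenspace L (-c)) :=
        LinearMap.finrank_le_finrank_of_injective hg
end

section
/- Let E be a real inner product space, let x ∈ E with ‖x‖ = 1, let P : E → E be P v = v - ⟪x,v⟫·x, let J : E → E be linear, and let c > 0. Define L : E × E → E × E by L(n₁, n₂) = (P n₂, c • (J n₁) + J (P n₂) - c • n₂). Suppose λ ∈ ℝ with λ ≠ 0, and n₂ ∈ E with n₂ ≠ 0, ⟪x, n₂⟫ = 0, and J n₂ = λ • n₂. Then L((1/λ) • n₂, n₂) = λ • ((1/λ) • n₂, n₂); that is, every nonzero eigenvalue of J whose eigenvector lies in the tangent space at x is also an eigenvalue of L, with eigenvector ((1/λ) n₂, n₂).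 -/
open scoped RealInnerProductSpace

/-- From the proof of Theorem 1 of the paper: every nonzero eigenvalue `λ` of
`J` whose eigenvector `n₂` lies in the tangent space at `x` is also an
eigenvalue of the linearization
`L(n₁, n₂) = (P n₂, c J n₁ + J (P n₂) - c n₂)`, with eigenvector
`((1/λ) n₂, n₂)`. -/
theorem eigenvalue_lifting
    (E : Type*) [NormedAddCommGroup E] [InnerProductSpace ℝ E]
    (x : E) (hx : ‖x‖ = 1)
    (J : E →ₗ[ℝ] E) (c : ℝ) (hc : 0 < c)
    (L : Module.End ℝ (E × E))
    (hL : ∀ p : E × E,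
      L p = (sproj x p.2, c • J p.1 + J (sproj x p.2) - c • p.2))
    (lam : ℝ) (hlam : lam ≠ 0)
    (n₂ : E) (hn₂ : n₂ ≠ 0)
    (htangent : ⟪x, n₂⟫ = 0)
    (heig : J n₂ = lam • n₂) :
    L ((1/lam) • n₂, n₂) = lam • ((1/lam) • n₂, n₂) := by
  have hP : sproj x n₂ = n₂ := by simp [sproj, htangent]
  rw [hL]
  simp only [hP]
  refine Prod.ext ?_ ?_
  · simp [smul_smul, hlam]
  · simp [heig, map_smul, smul_smul, mul_comm, mul_div_assoc, hlam]
end
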